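/- arXiv:1106.3653 — 3 statements merged into one kernel-verified Lean document; each statement's English description precedes it below -/
import Mathlib

section
/- Let σ and τ be patterns that are both even-Wilf-equivalent and Wilf-equivalent. Then σʳ and τʳ are even-Wilf-equivalent, and σᶜ and τᶜ are even-Wilf-equivalent. -/
/-- A permutation `π` contains the pattern `σ` if some subsequence of `π`
(given by a strictly increasing choice of indices) is order-isomorphic to `σ`. -/
def Pattern.Contains {k n : ℕ} (σ : Equiv.Perm (Fin k)) (π : Equiv.Perm (Fin n)) : Prop :=
  ∃ f : Fin k → Fin n, StrictMono f ∧ ∀ a b : Fin k, π (f a) < π (f b) ↔ σ a < σ b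

/-- `π` avoids the pattern `σ`. -/
def Pattern.Avoids {k n : ℕ} (σ : Equiv.Perm (Fin k)) (π : Equiv.Perm (Fin n)) : Prop :=
  ¬ Pattern.Contains σ π

/-- `eav n σ`: the number of even permutations of length `n` avoiding `σ`. -/
noncomputable def eav (n : ℕ) {k : ℕ} (σ : Equiv.Perm (Fin k)) : ℕ :=
  Nat.card {π : Equiv.Perm (Fin n) // Equiv.Perm.sign π = 1 ∧ Pattern.Avoids σ π}

/-- Even-Wilf-equivalence: the same number of even avoiders of every length. -/
def EvenWilfEquiv {k l : ℕ} (σ : Equiv.Perm (Fin k)) (τ : Equiv.Perm (Fin l)) : Prop :=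
  ∀ n : ℕ, eav n σ = eav n τ


/-- `sav n σ`: the number of all permutations of length `n` avoiding `σ`. -/
noncomputable def sav (n : ℕ) {k : ℕ} (σ : Equiv.Perm (Fin k)) : ℕ :=
  Nat.card {π : Equiv.Perm (Fin n) // Pattern.Avoids σ π}

/-- Classical Wilf-equivalence. -/
def WilfEquiv {k l : ℕ} (σ : Equiv.Perm (Fin k)) (τ : Equiv.Perm (Fin l)) : Prop :=
  ∀ n : ℕ, sav n σ = sav n τ


/-- The reverse of a permutation: `πʳ(i) = π(n+1-i)` (0-indexed: `πʳ i = π (Fin.rev i)`). -/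
def reversePerm {n : ℕ} (π : Equiv.Perm (Fin n)) : Equiv.Perm (Fin n) :=
  Fin.revPerm.trans π

/-- The complement of a permutation: `πᶜ(i) = n+1-π(i)` (0-indexed: `πᶜ i = Fin.rev (π i)`). -/
def complementPerm {n : ℕ} (π : Equiv.Perm (Fin n)) : Equiv.Perm (Fin n) :=
  π.trans Fin.revPerm


open Equiv in
lemma revPerm_involutive {n : ℕ} (π : Equiv.Perm (Fin n)) :
    reversePerm (reversePerm π) = π := by
  ext i; simp [reversePerm]

open Equiv in
lemma compPerm_involutive {n : ℕ} (π : Equiv.Perm (Fin n)) :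
    complementPerm (complementPerm π) = π := by
  ext i; simp [complementPerm]

lemma contains_rev {k n : ℕ} (σ : Equiv.Perm (Fin k)) (π : Equiv.Perm (Fin n))
    (h : Pattern.Contains σ π) : Pattern.Contains (reversePerm σ) (reversePerm π) := by
  obtain ⟨f, hf, hfp⟩ := h
  refine ⟨fun a => (f a.rev).rev, ?_, ?_⟩
  · intro a b hab
    exact Fin.rev_lt_rev.mpr (hf (Fin.rev_lt_rev.mpr hab))
  · intro a b
    simpa [reversePerm] using hfp a.rev b.rev

lemma contains_comp {k n : ℕ} (σ : Equiv.Perm (Fin k)) (π : Equiv.Perm (Fin n))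
    (h : Pattern.Contains σ π) : Pattern.Contains (complementPerm σ) (complementPerm π) := by
  obtain ⟨f, hf, hfp⟩ := h
  refine ⟨f, hf, fun a b => ?_⟩
  simp only [complementPerm, Equiv.trans_apply, Fin.revPerm_apply, Fin.rev_lt_rev]
  exact hfp b a

lemma contains_rev_iff {k n : ℕ} (σ : Equiv.Perm (Fin k)) (π : Equiv.Perm (Fin n)) :
    Pattern.Contains (reversePerm σ) π ↔ Pattern.Contains σ (reversePerm π) := by
  constructor
  · intro h
    have := contains_rev _ _ h
    rwa [revPerm_involutive] at this
  · intro h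
    have := contains_rev _ _ h
    rwa [revPerm_involutive] at this

lemma contains_comp_iff {k n : ℕ} (σ : Equiv.Perm (Fin k)) (π : Equiv.Perm (Fin n)) :
    Pattern.Contains (complementPerm σ) π ↔ Pattern.Contains σ (complementPerm π) := by
  constructor
  · intro h
    have := contains_comp _ _ h
    rwa [compPerm_involutive] at this
  · intro h
    have := contains_comp _ _ h
    rwa [compPerm_involutive] at this

lemma sign_reversePerm {n : ℕ} (π : Equiv.Perm (Fin n)) :
    Equiv.Perm.sign (reversePerm π)
      = Equiv.Perm.sign π * Equiv.Perm.sign (Fin.revPerm : Equiv.Perm (Fin n)) := by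
  have : reversePerm π = π * Fin.revPerm := rfl
  rw [this, map_mul]

lemma sign_complementPerm {n : ℕ} (π : Equiv.Perm (Fin n)) :
    Equiv.Perm.sign (complementPerm π)
      = Equiv.Perm.sign π * Equiv.Perm.sign (Fin.revPerm : Equiv.Perm (Fin n)) := by
  have : complementPerm π = Fin.revPerm * π := rfl
  rw [this, map_mul, mul_comm]

/-- The involution `reversePerm` as an `Equiv`. -/
def revEquiv (n : ℕ) : Equiv.Perm (Fin n) ≃ Equiv.Perm (Fin n) :=
  ⟨reversePerm, reversePerm, revPerm_involutive, revPerm_involutive⟩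

def compEquiv (n : ℕ) : Equiv.Perm (Fin n) ≃ Equiv.Perm (Fin n) :=
  ⟨complementPerm, complementPerm, compPerm_involutive, compPerm_involutive⟩

lemma eav_rev_eq {n k : ℕ} (σ : Equiv.Perm (Fin k)) :
    eav n (reversePerm σ)
      = Nat.card {π : Equiv.Perm (Fin n) //
          Equiv.Perm.sign π = Equiv.Perm.sign (Fin.revPerm : Equiv.Perm (Fin n))
            ∧ Pattern.Avoids σ π} := by
  apply Nat.card_congr
  refine Equiv.subtypeEquiv (revEquiv n) (fun π => ?_)
  constructor
  · rintro ⟨hs, ha⟩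
    refine ⟨?_, ?_⟩
    · rw [show (revEquiv n) π = reversePerm π from rfl, sign_reversePerm, hs, one_mul]
    · intro hc
      exact ha ((contains_rev_iff σ π).mpr hc)
  · rintro ⟨hs, ha⟩
    refine ⟨?_, ?_⟩
    · rw [show (revEquiv n) π = reversePerm π from rfl, sign_reversePerm] at hs
      exact mul_right_cancel (b := (Equiv.Perm.sign (Fin.revPerm : Equiv.Perm (Fin n))))
        (by rw [hs, one_mul])
    · intro hc
      exact ha ((contains_rev_iff σ π).mp hc)

lemma eav_comp_eq {n k : ℕ} (σ : Equiv.Perm (Fin k)) :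
    eav n (complementPerm σ)
      = Nat.card {π : Equiv.Perm (Fin n) //
          Equiv.Perm.sign π = Equiv.Perm.sign (Fin.revPerm : Equiv.Perm (Fin n))
            ∧ Pattern.Avoids σ π} := by
  apply Nat.card_congr
  refine Equiv.subtypeEquiv (compEquiv n) (fun π => ?_)
  constructor
  · rintro ⟨hs, ha⟩
    refine ⟨?_, ?_⟩
    · rw [show (compEquiv n) π = complementPerm π from rfl, sign_complementPerm, hs, one_mul]
    · intro hc
      exact ha ((contains_comp_iff σ π).mpr hc)
  · rintro ⟨hs, ha⟩
    refine ⟨?_, ?_⟩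
    · rw [show (compEquiv n) π = complementPerm π from rfl, sign_complementPerm] at hs
      exact mul_right_cancel (b := (Equiv.Perm.sign (Fin.revPerm : Equiv.Perm (Fin n))))
        (by rw [hs, one_mul])
    · intro hc
      exact ha ((contains_comp_iff σ π).mp hc)

lemma card_split {α : Type*} [Fintype α] (p q : α → Prop) :
    Nat.card {x // p x ∧ q x} + Nat.card {x // ¬ p x ∧ q x} = Nat.card {x // q x} := by
  classical
  rw [Nat.card_congr (Equiv.subtypeEquivRight (q := fun x => q x ∧ p x) fun x => and_comm),
      Nat.card_congr (Equiv.subtypeEquivRight (q := fun x => q x ∧ ¬ p x) fun x => and_comm)]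
  simp only [Nat.card_eq_fintype_card, Fintype.card_subtype]
  rw [← Finset.filter_filter, ← Finset.filter_filter,
      Finset.card_filter_add_card_filter_not]

lemma eav_add_odd {n k : ℕ} (σ : Equiv.Perm (Fin k)) :
    eav n σ + Nat.card {π : Equiv.Perm (Fin n) //
        Equiv.Perm.sign π = -1 ∧ Pattern.Avoids σ π} = sav n σ := by
  have h := card_split (fun π : Equiv.Perm (Fin n) => Equiv.Perm.sign π = 1)
    (Pattern.Avoids σ)
  have h2 : Nat.card {π : Equiv.Perm (Fin n) //
      ¬ Equiv.Perm.sign π = 1 ∧ Pattern.Avoids σ π}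
      = Nat.card {π : Equiv.Perm (Fin n) //
      Equiv.Perm.sign π = -1 ∧ Pattern.Avoids σ π} := by
    apply Nat.card_congr
    refine Equiv.subtypeEquivRight (fun π => ?_)
    constructor
    · rintro ⟨hs, ha⟩
      exact ⟨by rcases Int.units_eq_one_or (Equiv.Perm.sign π) with h | h <;> simp_all, ha⟩
    · rintro ⟨hs, ha⟩
      exact ⟨by simp [hs], ha⟩
  rw [eav, sav, ← h, h2]

/-- If `σ` and `τ` are both even-Wilf-equivalent and Wilf-equivalent then their reverses are
even-Wilf-equivalent and their complements are even-Wilf-equivalent. -/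
theorem stmt3 (k : ℕ) (σ τ : Equiv.Perm (Fin k))
    (h1 : EvenWilfEquiv σ τ) (h2 : WilfEquiv σ τ) :
    EvenWilfEquiv (reversePerm σ) (reversePerm τ) ∧
      EvenWilfEquiv (complementPerm σ) (complementPerm τ) := by
  have key : ∀ (ρ η : Equiv.Perm (Fin k)), EvenWilfEquiv ρ η → WilfEquiv ρ η →
      ∀ n : ℕ, Nat.card {π : Equiv.Perm (Fin n) //
        Equiv.Perm.sign π = Equiv.Perm.sign (Fin.revPerm : Equiv.Perm (Fin n))
          ∧ Pattern.Avoids ρ π}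
      = Nat.card {π : Equiv.Perm (Fin n) //
        Equiv.Perm.sign π = Equiv.Perm.sign (Fin.revPerm : Equiv.Perm (Fin n))
          ∧ Pattern.Avoids η π} := by
    intro ρ η he hw n
    rcases Int.units_eq_one_or (Equiv.Perm.sign (Fin.revPerm : Equiv.Perm (Fin n))) with h | h
    · rw [h]
      exact he n
    · rw [h]
      have hρ := eav_add_odd (n := n) ρ
      have hη := eav_add_odd (n := n) η
      have h1' := he n
      have h2' := hw n
      omega
  constructor <;> intro n
  · rw [eav_rev_eq, eav_rev_eq]
    exact key σ τ h1 h2 n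
  · rw [eav_comp_eq, eav_comp_eq]
    exact key σ τ h1 h2 n
end

section
/- The patterns 123, 312, and 231 are pairwise even-Wilf-equivalent: for all n ≥ 0, eav_n(123) = eav_n(312) = eav_n(231). -/
/-- The pattern `123` (one-line notation, 1-indexed). -/
def p123 : Equiv.Perm (Fin 3) :=
  ⟨![0,1,2], ![0,1,2], by decide, by decide⟩

/-- The pattern `312` (one-line notation, 1-indexed). -/
def p312 : Equiv.Perm (Fin 3) :=
  ⟨![2,0,1], ![1,2,0], by decide, by decide⟩

/-- The pattern `231` (one-line notation, 1-indexed). -/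
def p231 : Equiv.Perm (Fin 3) :=
  ⟨![1,2,0], ![2,0,1], by decide, by decide⟩


namespace EW
open Equiv Equiv.Perm Finset

/-- `π` has an increasing subsequence of length 3. -/
def Has123 {N : ℕ} (π : Perm (Fin N)) : Prop :=
  ∃ i j k : Fin N, i < j ∧ j < k ∧ π i < π j ∧ π j < π k

/-- `π` has an occurrence of the pattern 312. -/
def Has312 {N : ℕ} (π : Perm (Fin N)) : Prop :=
  ∃ i j k : Fin N, i < j ∧ j < k ∧ π j < π k ∧ π k < π i

instance {N : ℕ} : DecidablePred (Has123 (N := N)) := fun _ => by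
  unfold Has123; infer_instance
instance {N : ℕ} : DecidablePred (Has312 (N := N)) := fun _ => by
  unfold Has312; infer_instance

/-- the "cons" of a value `v` and a pattern `π'`: the permutation whose
one-line notation is `v` followed by the standardization-inverse of `π'`. -/
def cons {n : ℕ} (v : Fin (n+1)) (π' : Perm (Fin n)) : Perm (Fin (n+1)) :=
  ((v.cycleRange).symm : Perm (Fin (n+1))) * Equiv.Perm.decomposeFin.symm (0, π')

@[simp] lemma cons_zero {n : ℕ} (v : Fin (n+1)) (π' : Perm (Fin n)) :
    cons v π' 0 = v := by
  simp [cons, Equiv.Perm.mul_apply, Equiv.Perm.decomposeFin_symm_apply_zero]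

@[simp] lemma cons_succ {n : ℕ} (v : Fin (n+1)) (π' : Perm (Fin n)) (i : Fin n) :
    cons v π' i.succ = v.succAbove (π' i) := by
  simp [cons, Equiv.Perm.mul_apply, Equiv.Perm.decomposeFin_symm_apply_succ]

lemma sign_cons {n : ℕ} (v : Fin (n+1)) (π' : Perm (Fin n)) :
    Equiv.Perm.sign (cons v π') = (-1) ^ (v : ℕ) * Equiv.Perm.sign π' := by
  have h1 : Equiv.Perm.sign ((v.cycleRange).symm : Perm (Fin (n+1))) = (-1) ^ (v : ℕ) := by
    rw [Equiv.Perm.sign_symm, Fin.sign_cycleRange]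
  have h2 : Equiv.Perm.sign (Equiv.Perm.decomposeFin.symm (0, π')) = Equiv.Perm.sign π' := by
    rw [Equiv.Perm.decomposeFin.symm_sign]
    simp
  rw [cons, map_mul, h1, h2]

lemma cons_bijective {n : ℕ} :
    Function.Bijective (fun p : Fin (n+1) × Perm (Fin n) => cons p.1 p.2) := by
  constructor
  · rintro ⟨v, π'⟩ ⟨w, τ'⟩ h
    simp only at h
    have hv : v = w := by
      have := congrArg (fun σ : Perm (Fin (n+1)) => σ 0) h
      simpa using this
    subst hv
    have : Equiv.Perm.decomposeFin.symm (0, π') = Equiv.Perm.decomposeFin.symm (0, τ') := by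
      have := mul_left_cancel h
      exact this
    have := Equiv.Perm.decomposeFin.symm.injective this
    simp only [Prod.mk.injEq] at this
    simp [this.2]
  · intro π
    set v := π 0 with hv
    set σ := (v.cycleRange : Perm (Fin (n+1))) * π with hσ
    have hσ0 : σ 0 = 0 := by
      simp [hσ, Equiv.Perm.mul_apply, ← hv, Fin.cycleRange_self]
    refine ⟨⟨v, (Equiv.Perm.decomposeFin σ).2⟩, ?_⟩
    have hd : Equiv.Perm.decomposeFin.symm (Equiv.Perm.decomposeFin σ) = σ :=
      Equiv.Perm.decomposeFin.symm_apply_apply σ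
    have h1 : (Equiv.Perm.decomposeFin σ).1 = σ 0 := by
      rcases h' : Equiv.Perm.decomposeFin σ with ⟨p, e⟩
      rw [h'] at hd
      rw [← hd]
      simp [Equiv.Perm.decomposeFin_symm_apply_zero]
    simp only
    rw [cons]
    have : (0 : Fin (n+1)) = (Equiv.Perm.decomposeFin σ).1 := by rw [h1, hσ0]
    rw [this, Prod.mk.eta, hd, hσ]
    ext x
    simp [Equiv.Perm.mul_apply]


lemma contains123_iff {N : ℕ} (π : Perm (Fin N)) :
    Pattern.Contains p123 π ↔ Has123 π := by
  constructor
  · rintro ⟨f, hf, hc⟩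
    exact ⟨f 0, f 1, f 2, hf (by decide), hf (by decide),
      (hc 0 1).2 (by decide), (hc 1 2).2 (by decide)⟩
  · rintro ⟨i, j, k, hij, hjk, h1, h2⟩
    refine ⟨![i, j, k], ?_, ?_⟩
    · intro a b hab
      fin_cases a <;> fin_cases b <;>
        first
        | exact absurd hab (by decide)
        | simpa using hij
        | simpa using hjk
        | simpa using hij.trans hjk
    · intro a b
      have h13 : π i < π k := h1.trans h2
      fin_cases a <;> fin_cases b <;>
        simp_all [p123, lt_irrefl, asymm h1, asymm h2, asymm h13] <;> decide
  
lemma contains312_iff {N : ℕ} (π : Perm (Fin N)) :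
    Pattern.Contains p312 π ↔ Has312 π := by
  constructor
  · rintro ⟨f, hf, hc⟩
    exact ⟨f 0, f 1, f 2, hf (by decide), hf (by decide),
      (hc 1 2).2 (by decide), (hc 2 0).2 (by decide)⟩
  · rintro ⟨i, j, k, hij, hjk, h1, h2⟩
    refine ⟨![i, j, k], ?_, ?_⟩
    · intro a b hab
      fin_cases a <;> fin_cases b <;>
        first
        | exact absurd hab (by decide)
        | simpa using hij
        | simpa using hjk
        | simpa using hij.trans hjk
    · intro a b
      have h13 : π j < π i := h1.trans h2
      fin_cases a <;> fin_cases b <;>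
        simp_all [p312, lt_irrefl, asymm h1, asymm h2, asymm h13] <;> decide

lemma contains_inv {k N : ℕ} (σ : Perm (Fin k)) (π : Perm (Fin N)) :
    Pattern.Contains σ π → Pattern.Contains σ⁻¹ π⁻¹ := by
  rintro ⟨f, hf, hc⟩
  refine ⟨fun c => π (f (σ⁻¹ c)), ?_, ?_⟩
  · intro a b hab
    exact (hc _ _).2 (by simpa using hab)
  · intro a b
    simp only [Equiv.Perm.inv_def, Equiv.symm_apply_apply]
    exact hf.lt_iff_lt

lemma p312_inv : p312⁻¹ = p231 := by decide


/-- values `≥ t` appear in strictly decreasing order -/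
def Dp {N : ℕ} (π : Perm (Fin N)) (t : ℕ) : Prop :=
  ∀ i j : Fin N, i < j → t ≤ (π i : ℕ) → t ≤ (π j : ℕ) → (π j : ℕ) < (π i : ℕ)

/-- values `< t` appear in strictly decreasing order -/
def Ap {N : ℕ} (π : Perm (Fin N)) (t : ℕ) : Prop :=
  ∀ i j : Fin N, i < j → (π i : ℕ) < t → (π j : ℕ) < t → (π j : ℕ) < (π i : ℕ)

instance {N : ℕ} (π : Perm (Fin N)) : DecidablePred (Dp π) := fun _ => by
  unfold Dp; infer_instance
instance {N : ℕ} (π : Perm (Fin N)) : DecidablePred (Ap π) := fun _ => by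
  unfold Ap; infer_instance

lemma Dp_mono {N : ℕ} {π : Perm (Fin N)} {t t' : ℕ} (h : t ≤ t') (hD : Dp π t) : Dp π t' :=
  fun i j hij hi hj => hD i j hij (h.trans hi) (h.trans hj)

lemma Ap_anti {N : ℕ} {π : Perm (Fin N)} {t t' : ℕ} (h : t' ≤ t) (hA : Ap π t) : Ap π t' :=
  fun i j hij hi hj => hA i j hij (lt_of_lt_of_le hi h) (lt_of_lt_of_le hj h)

lemma Dp_of_big {N : ℕ} (π : Perm (Fin N)) {t : ℕ} (ht : N ≤ t + 1) : Dp π t := by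
  intro i j hij hi hj
  have hi' : (π i : ℕ) < N := (π i).isLt
  have hj' : (π j : ℕ) < N := (π j).isLt
  have : (π i : ℕ) = (π j : ℕ) := by omega
  exact absurd (π.injective (Fin.ext this)) (Fin.ne_of_lt hij)

lemma Ap_of_small {N : ℕ} (π : Perm (Fin N)) {t : ℕ} (ht : t ≤ 1) : Ap π t := by
  intro i j hij hi hj
  have : (π i : ℕ) = (π j : ℕ) := by omega
  exact absurd (π.injective (Fin.ext this)) (Fin.ne_of_lt hij)

/-- the least `t` such that values `≥ t` of `π` are decreasing. -/
def wst {N : ℕ} (π : Perm (Fin N)) : ℕ :=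
  Nat.find (⟨N, Dp_of_big π (by omega)⟩ : ∃ t, Dp π t)

/-- the greatest `t ≤ N` such that values `< t` of `π` are decreasing. -/
def mst {N : ℕ} (π : Perm (Fin N)) : ℕ := Nat.findGreatest (Ap π) N

lemma Dp_wst {N : ℕ} (π : Perm (Fin N)) : Dp π (wst π) := Nat.find_spec _

lemma wst_le_iff {N : ℕ} (π : Perm (Fin N)) {t : ℕ} : wst π ≤ t ↔ Dp π t := by
  constructor
  · exact fun h => Dp_mono h (Dp_wst π)
  · intro h
    exact Nat.find_le h

lemma wst_le {N : ℕ} (π : Perm (Fin (N+1))) : wst π ≤ N :=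
  (wst_le_iff π).2 (Dp_of_big π (by omega))

lemma wst_zero (π : Perm (Fin 0)) : wst π = 0 :=
  Nat.le_zero.1 ((wst_le_iff π).2 (Dp_of_big π (by omega)))

lemma mst_le {N : ℕ} (π : Perm (Fin N)) : mst π ≤ N := Nat.findGreatest_le N

lemma le_mst_iff {N : ℕ} (π : Perm (Fin N)) {t : ℕ} (ht : t ≤ N) : t ≤ mst π ↔ Ap π t := by
  constructor
  · intro h
    exact Ap_anti h (Nat.findGreatest_spec (Nat.zero_le N) (Ap_of_small π (by omega)))
  · intro h
    by_contra hlt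
    push_neg at hlt
    exact Nat.findGreatest_is_greatest hlt ht h

lemma mst_pos {N : ℕ} (π : Perm (Fin (N+1))) : 1 ≤ mst π :=
  (le_mst_iff π (by omega)).2 (Ap_of_small π le_rfl)

lemma mst_zero (π : Perm (Fin 0)) : mst π = 0 := Nat.le_zero.1 (mst_le π)

/-- coercion formula for succAbove -/
lemma coe_succAbove {n : ℕ} (v : Fin (n+1)) (u : Fin n) :
    (v.succAbove u : ℕ) = if (u : ℕ) < (v : ℕ) then (u : ℕ) else (u : ℕ) + 1 := by
  rcases lt_or_ge ((u : ℕ)) ((v : ℕ)) with h | h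
  · rw [if_pos h, Fin.succAbove_of_castSucc_lt _ _
      (by rwa [Fin.lt_iff_val_lt_val, Fin.coe_castSucc])]
    exact Fin.coe_castSucc u
  · rw [if_neg (not_lt.2 h), Fin.succAbove_of_le_castSucc _ _
      (by rwa [Fin.le_iff_val_le_val, Fin.coe_castSucc])]
    exact Fin.val_succ u

lemma has123_cons_iff {n : ℕ} (v : Fin (n+1)) (π' : Perm (Fin n)) :
    ¬ Has123 (cons v π') ↔ (¬ Has123 π' ∧ Dp π' (v : ℕ)) := by
  constructor
  · intro h
    constructor
    · rintro ⟨i, j, k, hij, hjk, h1, h2⟩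
      refine h ⟨i.succ, j.succ, k.succ, by simpa using hij, by simpa using hjk, ?_, ?_⟩ <;>
        simp only [cons_succ] <;>
        exact (Fin.strictMono_succAbove v) ‹_›
    · intro i j hij hi hj
      by_contra hc
      push_neg at hc
      have hne : (π' i : ℕ) ≠ (π' j : ℕ) := fun he =>
        absurd (π'.injective (Fin.ext he)) (Fin.ne_of_lt hij)
      have hlt : (π' i : ℕ) < (π' j : ℕ) := by omega
      refine h ⟨0, i.succ, j.succ, Fin.succ_pos i, by simpa using hij, ?_, ?_⟩
      · rw [cons_zero, cons_succ]
        have : (v : ℕ) < (v.succAbove (π' i) : ℕ) := by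
          rw [coe_succAbove]; split_ifs <;> omega
        exact this
      · rw [cons_succ, cons_succ]
        have : (v.succAbove (π' i) : ℕ) < (v.succAbove (π' j) : ℕ) := by
          rw [coe_succAbove, coe_succAbove]; split_ifs <;> omega
        exact this
  · rintro ⟨h1, h2⟩ ⟨i, j, k, hij, hjk, ha, hb⟩
    -- case on whether i = 0
    rcases Fin.eq_zero_or_eq_succ i with rfl | ⟨i', rfl⟩
    · rcases Fin.eq_zero_or_eq_succ j with rfl | ⟨j', rfl⟩
      · exact absurd hij (lt_irrefl _)
      rcases Fin.eq_zero_or_eq_succ k with rfl | ⟨k', rfl⟩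
      · exact absurd (hij.trans hjk) (Fin.not_lt_zero _)
      rw [cons_zero, cons_succ] at ha
      rw [cons_succ, cons_succ] at hb
      have hj' : (v : ℕ) ≤ (π' j' : ℕ) := by
        have := (Fin.lt_iff_val_lt_val.1 ha)
        rw [coe_succAbove] at this; split_ifs at this <;> omega
      have hjk' : (π' j' : ℕ) < (π' k' : ℕ) := by
        have := (Fin.lt_iff_val_lt_val.1 hb)
        rw [coe_succAbove, coe_succAbove] at this
        split_ifs at this <;> omega
      have hk' : (v : ℕ) ≤ (π' k' : ℕ) := le_of_lt (lt_of_le_of_lt hj' hjk')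
      have := h2 j' k' (by simpa using hjk) hj' hk'
      omega
    · rcases Fin.eq_zero_or_eq_succ j with rfl | ⟨j', rfl⟩
      · exact absurd hij (Fin.not_lt_zero _)
      rcases Fin.eq_zero_or_eq_succ k with rfl | ⟨k', rfl⟩
      · exact absurd (hij.trans hjk) (Fin.not_lt_zero _)
      rw [cons_succ, cons_succ] at ha hb
      exact h1 ⟨i', j', k', by simpa using hij, by simpa using hjk,
        (Fin.succAbove_lt_succAbove_iff).1 ha, (Fin.succAbove_lt_succAbove_iff).1 hb⟩

lemma has312_cons_iff {n : ℕ} (v : Fin (n+1)) (π' : Perm (Fin n)) :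
    ¬ Has312 (cons v π') ↔ (¬ Has312 π' ∧ Ap π' (v : ℕ)) := by
  constructor
  · intro h
    constructor
    · rintro ⟨i, j, k, hij, hjk, h1, h2⟩
      refine h ⟨i.succ, j.succ, k.succ, by simpa using hij, by simpa using hjk, ?_, ?_⟩ <;>
        simp only [cons_succ] <;>
        exact (Fin.strictMono_succAbove v) ‹_›
    · intro i j hij hi hj
      by_contra hc
      push_neg at hc
      have hne : (π' i : ℕ) ≠ (π' j : ℕ) := fun he =>
        absurd (π'.injective (Fin.ext he)) (Fin.ne_of_lt hij)
      have hlt : (π' i : ℕ) < (π' j : ℕ) := by omega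
      refine h ⟨0, i.succ, j.succ, Fin.succ_pos i, by simpa using hij, ?_, ?_⟩
      · rw [cons_succ, cons_succ]
        have : (v.succAbove (π' i) : ℕ) < (v.succAbove (π' j) : ℕ) := by
          rw [coe_succAbove, coe_succAbove]; split_ifs <;> omega
        exact this
      · rw [cons_succ, cons_zero]
        have : (v.succAbove (π' j) : ℕ) < (v : ℕ) := by
          rw [coe_succAbove]; split_ifs <;> omega
        exact this
  · rintro ⟨h1, h2⟩ ⟨i, j, k, hij, hjk, ha, hb⟩
    rcases Fin.eq_zero_or_eq_succ i with rfl | ⟨i', rfl⟩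
    · rcases Fin.eq_zero_or_eq_succ j with rfl | ⟨j', rfl⟩
      · exact absurd hij (lt_irrefl _)
      rcases Fin.eq_zero_or_eq_succ k with rfl | ⟨k', rfl⟩
      · exact absurd (hij.trans hjk) (Fin.not_lt_zero _)
      rw [cons_succ, cons_succ] at ha
      rw [cons_succ, cons_zero] at hb
      have hk' : (π' k' : ℕ) < (v : ℕ) := by
        have := (Fin.lt_iff_val_lt_val.1 hb)
        rw [coe_succAbove] at this
        split_ifs at this <;> omega
      have hjk' : (π' j' : ℕ) < (π' k' : ℕ) := by
        have := (Fin.lt_iff_val_lt_val.1 ha)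
        rw [coe_succAbove, coe_succAbove] at this
        split_ifs at this <;> omega
      have := h2 j' k' (by simpa using hjk) (hjk'.trans hk') hk'
      omega
    · rcases Fin.eq_zero_or_eq_succ j with rfl | ⟨j', rfl⟩
      · exact absurd hij (Fin.not_lt_zero _)
      rcases Fin.eq_zero_or_eq_succ k with rfl | ⟨k', rfl⟩
      · exact absurd (hij.trans hjk) (Fin.not_lt_zero _)
      rw [cons_succ, cons_succ] at ha hb
      exact h1 ⟨i', j', k', by simpa using hij, by simpa using hjk,
        (Fin.succAbove_lt_succAbove_iff).1 ha, (Fin.succAbove_lt_succAbove_iff).1 hb⟩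


lemma wst_cons_of_last {n : ℕ} (π' : Perm (Fin n)) (v : Fin (n+1)) (hv : (v : ℕ) = n) :
    wst (cons v π') = wst π' := by
  have key : ∀ t, Dp (cons v π') t ↔ Dp π' t := by
    intro t
    have hval : ∀ i : Fin n, (cons v π' i.succ : ℕ) = (π' i : ℕ) := by
      intro i
      rw [cons_succ, coe_succAbove, if_pos (by omega)]
    constructor
    · intro h i j hij hi hj
      have := h i.succ j.succ (by simpa using hij) (by rwa [hval]) (by rwa [hval])
      rwa [hval, hval] at this
    · intro h i j hij hi hj
      rcases Fin.eq_zero_or_eq_succ i with rfl | ⟨i', rfl⟩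
      · rcases Fin.eq_zero_or_eq_succ j with rfl | ⟨j', rfl⟩
        · exact absurd hij (lt_irrefl _)
        rw [cons_zero] at hi ⊢
        rw [hval] at hj ⊢
        have : (π' j' : ℕ) < n := (π' j').isLt
        omega
      · rcases Fin.eq_zero_or_eq_succ j with rfl | ⟨j', rfl⟩
        · exact absurd hij (Fin.not_lt_zero _)
        rw [hval] at hi hj ⊢
        rw [hval]
        exact h i' j' (by simpa using hij) hi hj
  apply le_antisymm
  · exact (wst_le_iff _).2 ((key _).2 (Dp_wst π'))
  · exact (wst_le_iff _).2 ((key _).1 (Dp_wst _))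

lemma wst_cons_of_lt {n : ℕ} (π' : Perm (Fin n)) (v : Fin (n+1)) (hv : (v : ℕ) < n)
    (hD : Dp π' (v : ℕ)) : wst (cons v π') = (v : ℕ) + 1 := by
  have hDc : Dp (cons v π') ((v : ℕ) + 1) := by
    intro i j hij hi hj
    rcases Fin.eq_zero_or_eq_succ i with rfl | ⟨i', rfl⟩
    · rw [cons_zero] at hi; omega
    rcases Fin.eq_zero_or_eq_succ j with rfl | ⟨j', rfl⟩
    · exact absurd hij (Fin.not_lt_zero _)
    simp only [cons_succ, coe_succAbove] at hi hj ⊢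
    have hi' : (v : ℕ) ≤ (π' i' : ℕ) := by split_ifs at hi <;> omega
    have hj' : (v : ℕ) ≤ (π' j' : ℕ) := by split_ifs at hj <;> omega
    have := hD i' j' (by simpa using hij) hi' hj'
    split_ifs <;> omega
  have hnD : ¬ Dp (cons v π') (v : ℕ) := by
    intro h
    set j : Fin n := π'⁻¹ ⟨n - 1, by omega⟩ with hj
    have hπj : (π' j : ℕ) = n - 1 := by rw [hj]; simp
    have h0 : (cons v π' 0 : ℕ) = (v : ℕ) := by rw [cons_zero]
    have hs : (cons v π' j.succ : ℕ) = n := by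
      rw [cons_succ, coe_succAbove, hπj, if_neg (by omega)]
      omega
    have := h 0 j.succ (Fin.succ_pos j) (by omega) (by omega)
    omega
  have h1 : wst (cons v π') ≤ (v : ℕ) + 1 := (wst_le_iff _).2 hDc
  have h2 : ¬ (wst (cons v π') ≤ (v : ℕ)) := fun h => hnD ((wst_le_iff _).1 h)
  omega

lemma mst_cons {n : ℕ} (π' : Perm (Fin n)) (v : Fin (n+1)) (hA : Ap π' (v : ℕ)) :
    mst (cons v π') = (v : ℕ) + 1 := by
  rw [mst, Nat.findGreatest_eq_iff]
  refine ⟨by omega, fun _ => ?_, fun t ht ht' => ?_⟩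
  · -- Ap (cons v π') (v+1)
    intro i j hij hi hj
    rcases Fin.eq_zero_or_eq_succ j with rfl | ⟨j', rfl⟩
    · exact absurd hij (Fin.not_lt_zero _)
    rcases Fin.eq_zero_or_eq_succ i with rfl | ⟨i', rfl⟩
    · rw [cons_succ, coe_succAbove] at hj ⊢
      rw [cons_zero]
      split_ifs at hj ⊢ <;> omega
    · simp only [cons_succ, coe_succAbove] at hi hj ⊢
      have hi' : (π' i' : ℕ) < (v : ℕ) := by split_ifs at hi <;> omega
      have hj' : (π' j' : ℕ) < (v : ℕ) := by split_ifs at hj <;> omega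
      have := hA i' j' (by simpa using hij) hi' hj'
      split_ifs <;> omega
  · -- no Ap for t ≥ v+2
    intro h
    have hvn : (v : ℕ) < n := by omega
    set j : Fin n := π'⁻¹ ⟨(v : ℕ), hvn⟩ with hj
    have hπj : (π' j : ℕ) = (v : ℕ) := by rw [hj]; simp
    have hs : (cons v π' j.succ : ℕ) = (v : ℕ) + 1 := by
      rw [cons_succ, coe_succAbove, hπj, if_neg (by omega)]
    have h0 : (cons v π' 0 : ℕ) = (v : ℕ) := by rw [cons_zero]
    have := h 0 j.succ (Fin.succ_pos j) (by omega) (by omega)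
    omega


-- ===== counting definitions =====

/-- integer-valued sign -/
def sgn {N : ℕ} (π : Perm (Fin N)) : ℤ := ((Equiv.Perm.sign π : ℤˣ) : ℤ)

lemma sgn_cons {n : ℕ} (v : Fin (n+1)) (π' : Perm (Fin n)) :
    sgn (cons v π') = (-1) ^ (v : ℕ) * sgn π' := by
  unfold sgn
  rw [sign_cons]
  push_cast
  ring

def tu (N w : ℕ) : ℤ :=
  ((univ.filter fun π : Perm (Fin N) => ¬ Has123 π ∧ wst π = w).card : ℤ)
def pu (N w : ℕ) : ℤ :=
  ∑ π ∈ univ.filter (fun π : Perm (Fin N) => ¬ Has123 π ∧ wst π = w), sgn π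
def tv (N m : ℕ) : ℤ :=
  ((univ.filter fun π : Perm (Fin N) => ¬ Has312 π ∧ mst π = m).card : ℤ)
def pv (N m : ℕ) : ℤ :=
  ∑ π ∈ univ.filter (fun π : Perm (Fin N) => ¬ Has312 π ∧ mst π = m), sgn π

/-- generic fiber-splitting lemma -/
lemma sum_fiber {N : ℕ} (P : Perm (Fin N) → Prop) [DecidablePred P]
    (s : Perm (Fin N) → ℕ) (f : Perm (Fin N) → ℤ) (t : Finset ℕ) :
    ∑ w ∈ t, ∑ π ∈ univ.filter (fun π => P π ∧ s π = w), f π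
      = ∑ π ∈ univ.filter (fun π => P π ∧ s π ∈ t), f π := by
  classical
  simp only [Finset.sum_filter]
  rw [Finset.sum_comm]
  refine Finset.sum_congr rfl fun π _ => ?_
  by_cases hP : P π
  · simp [hP]
  · simp [hP]

/-- master reindexing -/
lemma sum_perm_succ {N : ℕ} (F : Perm (Fin (N+1)) → ℤ) :
    ∑ π : Perm (Fin (N+1)), F π = ∑ v : Fin (N+1), ∑ π' : Perm (Fin N), F (cons v π') := by
  calc ∑ π : Perm (Fin (N+1)), F π
      = ∑ p : Fin (N+1) × Perm (Fin N), F (cons p.1 p.2) :=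
        (Fintype.sum_bijective _ cons_bijective _ _ fun _ => rfl).symm
    _ = ∑ v : Fin (N+1), ∑ π' : Perm (Fin N), F (cons v π') := Fintype.sum_prod_type _

-- partial sums
def SPu (N k : ℕ) : ℤ := ∑ w ∈ range (k+1), pu N w
def STu (N k : ℕ) : ℤ := ∑ w ∈ range (k+1), tu N w
def SPv (N k : ℕ) : ℤ := ∑ m ∈ Icc k N, pv N m
def STv (N k : ℕ) : ℤ := ∑ m ∈ Icc k N, tv N m

lemma filter_wst_le (N k : ℕ) :
    univ.filter (fun π : Perm (Fin N) => ¬ Has123 π ∧ wst π ≤ k)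
      = univ.filter (fun π : Perm (Fin N) => ¬ Has123 π ∧ wst π ∈ range (k+1)) := by
  apply Finset.filter_congr
  intro π _
  simp [Nat.lt_succ_iff]

lemma filter_mst_ge (N k : ℕ) :
    univ.filter (fun π : Perm (Fin N) => ¬ Has312 π ∧ k ≤ mst π)
      = univ.filter (fun π : Perm (Fin N) => ¬ Has312 π ∧ mst π ∈ Icc k N) := by
  apply Finset.filter_congr
  intro π _
  have := mst_le π
  simp only [Finset.mem_Icc]
  constructor
  · rintro ⟨h1, h2⟩; exact ⟨h1, h2, this⟩
  · rintro ⟨h1, h2, _⟩; exact ⟨h1, h2⟩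

lemma sum_sgn_wst_le (N k : ℕ) :
    ∑ π ∈ univ.filter (fun π : Perm (Fin N) => ¬ Has123 π ∧ wst π ≤ k), sgn π = SPu N k := by
  rw [SPu]
  simp only [pu]
  rw [sum_fiber (fun π : Perm (Fin N) => ¬ Has123 π) wst sgn (range (k+1)), filter_wst_le]

lemma sum_one_wst_le (N k : ℕ) :
    ((univ.filter (fun π : Perm (Fin N) => ¬ Has123 π ∧ wst π ≤ k)).card : ℤ) = STu N k := by
  rw [STu]
  simp only [tu]
  have h := sum_fiber (N := N) (fun π => ¬ Has123 π) wst (fun _ => (1:ℤ)) (range (k+1))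
  simp only [Finset.sum_const, nsmul_eq_mul, mul_one] at h
  rw [h, filter_wst_le]

lemma sum_sgn_mst_ge (N k : ℕ) :
    ∑ π ∈ univ.filter (fun π : Perm (Fin N) => ¬ Has312 π ∧ k ≤ mst π), sgn π = SPv N k := by
  rw [SPv]
  simp only [pv]
  rw [sum_fiber (fun π : Perm (Fin N) => ¬ Has312 π) mst sgn (Icc k N), filter_mst_ge]

lemma sum_one_mst_ge (N k : ℕ) :
    ((univ.filter (fun π : Perm (Fin N) => ¬ Has312 π ∧ k ≤ mst π)).card : ℤ) = STv N k := by
  rw [STv]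
  simp only [tv]
  have h := sum_fiber (N := N) (fun π => ¬ Has312 π) mst (fun _ => (1:ℤ)) (Icc k N)
  simp only [Finset.sum_const, nsmul_eq_mul, mul_one] at h
  rw [h, filter_mst_ge]

-- ===== condition transfer =====

lemma cond123_castSucc {N : ℕ} (u : Fin N) (π' : Perm (Fin N)) (w : ℕ) :
    ((¬ Has123 (cons u.castSucc π')) ∧ wst (cons u.castSucc π') = w)
      ↔ ((¬ Has123 π' ∧ wst π' ≤ (u:ℕ)) ∧ (u:ℕ)+1 = w) := by
  have hcoe : ((u.castSucc : Fin (N+1)) : ℕ) = (u:ℕ) := Fin.coe_castSucc u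
  constructor
  · rintro ⟨h1, h2⟩
    rw [has123_cons_iff] at h1
    rw [hcoe] at h1
    have heq := wst_cons_of_lt π' u.castSucc (by rw [hcoe]; exact u.isLt)
      (by rw [hcoe]; exact h1.2)
    rw [hcoe] at heq
    exact ⟨⟨h1.1, (wst_le_iff π').2 h1.2⟩, by omega⟩
  · rintro ⟨⟨hH, hle⟩, hw⟩
    have hD := (wst_le_iff π').1 hle
    have heq := wst_cons_of_lt π' u.castSucc (by rw [hcoe]; exact u.isLt)
      (by rw [hcoe]; exact hD)
    rw [hcoe] at heq
    refine ⟨?_, by omega⟩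
    rw [has123_cons_iff, hcoe]
    exact ⟨hH, hD⟩

lemma cond123_last {N : ℕ} (π' : Perm (Fin N)) (w : ℕ) :
    ((¬ Has123 (cons (Fin.last N) π')) ∧ wst (cons (Fin.last N) π') = w)
      ↔ (¬ Has123 π' ∧ wst π' = w) := by
  have hD : Dp π' ((Fin.last N : Fin (N+1)) : ℕ) := Dp_of_big π' (by simp)
  rw [has123_cons_iff, wst_cons_of_last π' _ (by simp)]
  tauto

lemma cond312 {N : ℕ} (v : Fin (N+1)) (π' : Perm (Fin N)) (m : ℕ) :
    ((¬ Has312 (cons v π')) ∧ mst (cons v π') = m)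
      ↔ ((¬ Has312 π' ∧ (v:ℕ) ≤ mst π') ∧ (v:ℕ)+1 = m) := by
  have hvN : (v:ℕ) ≤ N := by omega
  constructor
  · rintro ⟨h1, h2⟩
    rw [has312_cons_iff] at h1
    have heq := mst_cons π' v h1.2
    exact ⟨⟨h1.1, (le_mst_iff π' hvN).2 h1.2⟩, by omega⟩
  · rintro ⟨⟨hH, hle⟩, hm⟩
    have hA := (le_mst_iff π' hvN).1 hle
    refine ⟨?_, by rw [mst_cons π' v hA]; omega⟩
    rw [has312_cons_iff]
    exact ⟨hH, hA⟩

-- ===== recursions =====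

lemma pu_succ (N w : ℕ) :
    pu (N+1) w = (∑ u : Fin N, if (u:ℕ)+1 = w then (-1)^(u:ℕ) * SPu N (u:ℕ) else 0)
      + (-1)^N * pu N w := by
  unfold pu
  rw [Finset.sum_filter]
  rw [sum_perm_succ (fun π => if ¬ Has123 π ∧ wst π = w then sgn π else 0)]
  rw [Fin.sum_univ_castSucc]
  congr 1
  · refine Finset.sum_congr rfl fun u _ => ?_
    by_cases hw : (u:ℕ)+1 = w
    · rw [if_pos hw, ← sum_sgn_wst_le N (u:ℕ), Finset.mul_sum, Finset.sum_filter]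
      refine Finset.sum_congr rfl fun π' _ => ?_
      by_cases hc : ¬ Has123 π' ∧ wst π' ≤ (u:ℕ)
      · rw [if_pos ((cond123_castSucc u π' w).2 ⟨hc, hw⟩), if_pos hc, sgn_cons,
          Fin.coe_castSucc]
      · rw [if_neg (fun h => hc ((cond123_castSucc u π' w).1 h).1), if_neg hc]
    · rw [if_neg hw]
      refine Finset.sum_eq_zero fun π' _ => ?_
      rw [if_neg (fun h => hw ((cond123_castSucc u π' w).1 h).2)]
  · rw [Finset.mul_sum, Finset.sum_filter]
    refine Finset.sum_congr rfl fun π' _ => ?_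
    by_cases hc : ¬ Has123 π' ∧ wst π' = w
    · rw [if_pos ((cond123_last π' w).2 hc), if_pos hc, sgn_cons, Fin.val_last]
    · rw [if_neg (fun h => hc ((cond123_last π' w).1 h)), if_neg hc]

lemma tu_succ (N w : ℕ) :
    tu (N+1) w = (∑ u : Fin N, if (u:ℕ)+1 = w then STu N (u:ℕ) else 0) + tu N w := by
  have htu : ∀ (M w : ℕ), tu M w
      = ∑ π ∈ univ.filter (fun π : Perm (Fin M) => ¬ Has123 π ∧ wst π = w), (1:ℤ) := by
    intro M w; simp [tu]
  rw [htu]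
  rw [Finset.sum_filter]
  rw [sum_perm_succ (fun π => if ¬ Has123 π ∧ wst π = w then (1:ℤ) else 0)]
  rw [Fin.sum_univ_castSucc]
  congr 1
  · refine Finset.sum_congr rfl fun u _ => ?_
    by_cases hw : (u:ℕ)+1 = w
    · rw [if_pos hw, ← sum_one_wst_le N (u:ℕ)]
      rw [Finset.card_eq_sum_ones, Nat.cast_sum, Finset.sum_filter]
      refine Finset.sum_congr rfl fun π' _ => ?_
      by_cases hc : ¬ Has123 π' ∧ wst π' ≤ (u:ℕ)
      · rw [if_pos ((cond123_castSucc u π' w).2 ⟨hc, hw⟩), if_pos hc]; norm_num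
      · rw [if_neg (fun h => hc ((cond123_castSucc u π' w).1 h).1), if_neg hc]
    · rw [if_neg hw]
      refine Finset.sum_eq_zero fun π' _ => ?_
      rw [if_neg (fun h => hw ((cond123_castSucc u π' w).1 h).2)]
  · rw [htu, Finset.sum_filter]
    refine Finset.sum_congr rfl fun π' _ => ?_
    by_cases hc : ¬ Has123 π' ∧ wst π' = w
    · rw [if_pos ((cond123_last π' w).2 hc), if_pos hc]
    · rw [if_neg (fun h => hc ((cond123_last π' w).1 h)), if_neg hc]

lemma pv_succ (N m : ℕ) :
    pv (N+1) m = ∑ v : Fin (N+1), if (v:ℕ)+1 = m then (-1)^(v:ℕ) * SPv N (v:ℕ) else 0 := by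
  unfold pv
  rw [Finset.sum_filter]
  rw [sum_perm_succ (fun π => if ¬ Has312 π ∧ mst π = m then sgn π else 0)]
  refine Finset.sum_congr rfl fun v _ => ?_
  by_cases hm : (v:ℕ)+1 = m
  · rw [if_pos hm, ← sum_sgn_mst_ge N (v:ℕ), Finset.mul_sum, Finset.sum_filter]
    refine Finset.sum_congr rfl fun π' _ => ?_
    by_cases hc : ¬ Has312 π' ∧ (v:ℕ) ≤ mst π'
    · rw [if_pos ((cond312 v π' m).2 ⟨hc, hm⟩), if_pos hc, sgn_cons]
    · rw [if_neg (fun h => hc ((cond312 v π' m).1 h).1), if_neg hc]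
  · rw [if_neg hm]
    refine Finset.sum_eq_zero fun π' _ => ?_
    rw [if_neg (fun h => hm ((cond312 v π' m).1 h).2)]

lemma tv_succ (N m : ℕ) :
    tv (N+1) m = ∑ v : Fin (N+1), if (v:ℕ)+1 = m then STv N (v:ℕ) else 0 := by
  have htv : ∀ (M m : ℕ), tv M m
      = ∑ π ∈ univ.filter (fun π : Perm (Fin M) => ¬ Has312 π ∧ mst π = m), (1:ℤ) := by
    intro M m; simp [tv]
  rw [htv]
  rw [Finset.sum_filter]
  rw [sum_perm_succ (fun π => if ¬ Has312 π ∧ mst π = m then (1:ℤ) else 0)]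
  refine Finset.sum_congr rfl fun v _ => ?_
  by_cases hm : (v:ℕ)+1 = m
  · rw [if_pos hm, ← sum_one_mst_ge N (v:ℕ)]
    rw [Finset.card_eq_sum_ones, Nat.cast_sum, Finset.sum_filter]
    refine Finset.sum_congr rfl fun π' _ => ?_
    by_cases hc : ¬ Has312 π' ∧ (v:ℕ) ≤ mst π'
    · rw [if_pos ((cond312 v π' m).2 ⟨hc, hm⟩), if_pos hc]; norm_num
    · rw [if_neg (fun h => hc ((cond312 v π' m).1 h).1), if_neg hc]
  · rw [if_neg hm]
    refine Finset.sum_eq_zero fun π' _ => ?_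
    rw [if_neg (fun h => hm ((cond312 v π' m).1 h).2)]

-- ===== specializations, support, base =====

lemma pu_succ_zero (N : ℕ) : pu (N+1) 0 = (-1)^N * pu N 0 := by
  rw [pu_succ]; simp

lemma tu_succ_zero (N : ℕ) : tu (N+1) 0 = tu N 0 := by
  rw [tu_succ]; simp

lemma pu_succ_mid (N w : ℕ) (h1 : 1 ≤ w) (h2 : w ≤ N) :
    pu (N+1) w = (-1)^(w-1) * SPu N (w-1) + (-1)^N * pu N w := by
  rw [pu_succ]
  congr 1
  rw [Finset.sum_eq_single (⟨w-1, by omega⟩ : Fin N)]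
  · rw [if_pos (by simp; omega)]
  · intro b _ hb
    exact if_neg (fun hbw => hb (Fin.ext (by simpa using (by omega : (b:ℕ) = w - 1))))
  · exact fun h => absurd (Finset.mem_univ _) h

lemma tu_succ_mid (N w : ℕ) (h1 : 1 ≤ w) (h2 : w ≤ N) :
    tu (N+1) w = STu N (w-1) + tu N w := by
  rw [tu_succ]
  congr 1
  rw [Finset.sum_eq_single (⟨w-1, by omega⟩ : Fin N)]
  · rw [if_pos (by simp; omega)]
  · intro b _ hb
    exact if_neg (fun hbw => hb (Fin.ext (by simpa using (by omega : (b:ℕ) = w - 1))))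
  · exact fun h => absurd (Finset.mem_univ _) h

lemma pv_succ_zero (N : ℕ) : pv (N+1) 0 = 0 := by
  rw [pv_succ]
  exact Finset.sum_eq_zero fun v _ => if_neg (by omega)

lemma tv_succ_zero (N : ℕ) : tv (N+1) 0 = 0 := by
  rw [tv_succ]
  exact Finset.sum_eq_zero fun v _ => if_neg (by omega)

lemma pv_succ_mid (N m : ℕ) (h1 : 1 ≤ m) (h2 : m ≤ N+1) :
    pv (N+1) m = (-1)^(m-1) * SPv N (m-1) := by
  rw [pv_succ]
  rw [Finset.sum_eq_single (⟨m-1, by omega⟩ : Fin (N+1))]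
  · rw [if_pos (by simp; omega)]
  · intro b _ hb
    exact if_neg (fun hbw => hb (Fin.ext (by simpa using (by omega : (b:ℕ) = m - 1))))
  · exact fun h => absurd (Finset.mem_univ _) h

lemma tv_succ_mid (N m : ℕ) (h1 : 1 ≤ m) (h2 : m ≤ N+1) :
    tv (N+1) m = STv N (m-1) := by
  rw [tv_succ]
  rw [Finset.sum_eq_single (⟨m-1, by omega⟩ : Fin (N+1))]
  · rw [if_pos (by simp; omega)]
  · intro b _ hb
    exact if_neg (fun hbw => hb (Fin.ext (by simpa using (by omega : (b:ℕ) = m - 1))))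
  · exact fun h => absurd (Finset.mem_univ _) h

-- support lemmas

lemma filter_eq_empty_iff' {α : Type*} [Fintype α] [DecidableEq α] {p : α → Prop}
    [DecidablePred p] (h : ∀ a, ¬ p a) : (univ.filter p) = ∅ :=
  Finset.filter_false_of_mem (fun a _ => h a)

lemma pu_supp (N w : ℕ) (h : N ≤ w) (h0 : 0 < w) : pu N w = 0 := by
  unfold pu
  rw [filter_eq_empty_iff', Finset.sum_empty]
  rintro π ⟨_, hw⟩
  match N, π with
  | 0, π => exact absurd (hw ▸ wst_zero π) (by omega)
  | (M+1), π => exact absurd (hw ▸ wst_le π) (by omega)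

lemma tu_supp (N w : ℕ) (h : N ≤ w) (h0 : 0 < w) : tu N w = 0 := by
  unfold tu
  rw [filter_eq_empty_iff']
  · simp
  rintro π ⟨_, hw⟩
  match N, π with
  | 0, π => exact absurd (hw ▸ wst_zero π) (by omega)
  | (M+1), π => exact absurd (hw ▸ wst_le π) (by omega)

lemma pv_supp (N m : ℕ) (h : N < m) : pv N m = 0 := by
  unfold pv
  rw [filter_eq_empty_iff', Finset.sum_empty]
  rintro π ⟨_, hm⟩
  exact absurd (hm ▸ mst_le π) (by omega)

lemma tv_supp (N m : ℕ) (h : N < m) : tv N m = 0 := by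
  unfold tv
  rw [filter_eq_empty_iff']
  · simp
  rintro π ⟨_, hm⟩
  exact absurd (hm ▸ mst_le π) (by omega)

lemma pv_supp_zero (N : ℕ) (h : 0 < N) : pv N 0 = 0 := by
  match N with
  | (M+1) =>
    unfold pv
    rw [filter_eq_empty_iff', Finset.sum_empty]
    rintro π ⟨_, hm⟩
    exact absurd (hm ▸ mst_pos π) (by omega)

lemma tv_supp_zero (N : ℕ) (h : 0 < N) : tv N 0 = 0 := by
  match N with
  | (M+1) =>
    unfold tv
    rw [filter_eq_empty_iff']
    · simp
    rintro π ⟨_, hm⟩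
    exact absurd (hm ▸ mst_pos π) (by omega)

-- base values at N = 0

lemma perm0_cond (π : Perm (Fin 0)) :
    (¬ Has123 π ∧ wst π = 0) ∧ (¬ Has312 π ∧ mst π = 0) := by
  refine ⟨⟨?_, wst_zero π⟩, ?_, mst_zero π⟩ <;>
  · rintro ⟨i, _⟩
    exact i.elim0

lemma sgn0 (π : Perm (Fin 0)) : sgn π = 1 := by
  have : π = 1 := by
    ext i
    exact i.elim0
  rw [this]
  simp [sgn]

lemma card_perm0 : (univ : Finset (Perm (Fin 0))).card = 1 := by
  rw [Finset.card_univ]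
  simp [Fintype.card_perm]

lemma tu_base : tu 0 0 = 1 := by
  unfold tu
  rw [Finset.filter_true_of_mem (fun π _ => (perm0_cond π).1), card_perm0]
  rfl

lemma pu_base : pu 0 0 = 1 := by
  unfold pu
  rw [Finset.filter_true_of_mem (fun π _ => (perm0_cond π).1)]
  rw [Finset.sum_congr rfl (fun π _ => sgn0 π), Finset.sum_const, card_perm0]
  rfl

lemma tv_base : tv 0 0 = 1 := by
  unfold tv
  rw [Finset.filter_true_of_mem (fun π _ => (perm0_cond π).2), card_perm0]
  rfl

lemma pv_base : pv 0 0 = 1 := by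
  unfold pv
  rw [Finset.filter_true_of_mem (fun π _ => (perm0_cond π).2)]
  rw [Finset.sum_congr rfl (fun π _ => sgn0 π), Finset.sum_const, card_perm0]
  rfl


-- ===== pure algebra =====

lemma SPu_succ (N k : ℕ) : SPu N (k+1) = SPu N k + pu N (k+1) :=
  Finset.sum_range_succ _ _
lemma STu_succ (N k : ℕ) : STu N (k+1) = STu N k + tu N (k+1) :=
  Finset.sum_range_succ _ _
lemma SPu_zero (N : ℕ) : SPu N 0 = pu N 0 := by simp [SPu]
lemma STu_zero (N : ℕ) : STu N 0 = tu N 0 := by simp [STu]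
lemma SPv_top (N : ℕ) : SPv N N = pv N N := by simp [SPv]
lemma STv_top (N : ℕ) : STv N N = tv N N := by simp [STv]

lemma SPv_reindex (N k : ℕ) (hk : k ≤ N) (ih : ∀ w, w ≤ N → pu N w = pv N (N-w)) :
    SPv N (N-k) = SPu N k := by
  unfold SPv SPu
  refine (Finset.sum_bij' (fun (w : ℕ) (_ : w ∈ range (k+1)) => N - w)
    (fun (m : ℕ) (_ : m ∈ Icc (N-k) N) => N - m) ?_ ?_ ?_ ?_ ?_).symm
  · intro w hw
    simp only [mem_range] at hw
    simp only [Finset.mem_Icc]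
    omega
  · intro m hm
    simp only [Finset.mem_Icc] at hm
    simp only [mem_range]
    omega
  · intro w hw
    simp only [mem_range] at hw
    show N - (N - w) = w
    omega
  · intro m hm
    simp only [Finset.mem_Icc] at hm
    show N - (N - m) = m
    omega
  · intro w hw
    simp only [mem_range] at hw
    exact ih w (by omega)

lemma STv_reindex (N k : ℕ) (hk : k ≤ N) (ih : ∀ w, w ≤ N → tu N w = tv N (N-w)) :
    STv N (N-k) = STu N k := by
  unfold STv STu
  refine (Finset.sum_bij' (fun (w : ℕ) (_ : w ∈ range (k+1)) => N - w)
    (fun (m : ℕ) (_ : m ∈ Icc (N-k) N) => N - m) ?_ ?_ ?_ ?_ ?_).symm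
  · intro w hw
    simp only [mem_range] at hw
    simp only [Finset.mem_Icc]
    omega
  · intro m hm
    simp only [Finset.mem_Icc] at hm
    simp only [mem_range]
    omega
  · intro w hw
    simp only [mem_range] at hw
    show N - (N - w) = w
    omega
  · intro m hm
    simp only [Finset.mem_Icc] at hm
    show N - (N - m) = m
    omega
  · intro w hw
    simp only [mem_range] at hw
    exact ih w (by omega)

lemma neg_one_pow_even {n : ℕ} (h : n % 2 = 0) : (-1 : ℤ)^n = 1 :=
  Even.neg_one_pow (Nat.even_iff.mpr h)
lemma neg_one_pow_odd {n : ℕ} (h : n % 2 = 1) : (-1 : ℤ)^n = -1 :=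
  Odd.neg_one_pow (Nat.odd_iff.mpr h)

theorem corr : ∀ N : ℕ,
    (∀ w, w ≤ N → tu N w = tv N (N-w)) ∧
    (∀ w, w ≤ N → pu N w = pv N (N-w)) ∧
    (N % 2 = 1 → ∀ w, w % 2 = 1 → pu N w = 0) ∧
    (N % 2 = 0 → N ≠ 0 → ∀ k, k % 2 = 1 → SPu N k = 0) := by
  intro N
  induction N with
  | zero =>
    refine ⟨?_, ?_, ?_, ?_⟩
    · intro w hw
      interval_cases w
      rw [tu_base, Nat.sub_zero, tv_base]
    · intro w hw
      interval_cases w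
      rw [pu_base, Nat.sub_zero, pv_base]
    · intro h; omega
    · intro _ h; omega
  | succ N ih =>
    obtain ⟨ih1, ih2, ih3, ih4⟩ := ih
    have H3 : (N+1) % 2 = 1 → ∀ w, w % 2 = 1 → pu (N+1) w = 0 := by
      intro hN1 w hw
      have hNe : N % 2 = 0 := by omega
      rcases le_or_gt w N with hle | hgt
      · obtain ⟨w', rfl⟩ : ∃ w', w = w' + 1 := ⟨w - 1, by omega⟩
        rw [pu_succ_mid N (w'+1) (by omega) hle]
        rw [Nat.add_sub_cancel, neg_one_pow_even (by omega), neg_one_pow_even hNe,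
          one_mul, one_mul, ← SPu_succ]
        exact ih4 hNe (by omega) (w'+1) hw
      · exact pu_supp (N+1) w (by omega) (by omega)
    have H4 : (N+1) % 2 = 0 → (N+1) ≠ 0 → ∀ k, k % 2 = 1 → SPu (N+1) k = 0 := by
      intro hN1 _ k hk
      have hNo : N % 2 = 1 := by omega
      have hN1le : 1 ≤ N := by omega
      have key : ∀ j : ℕ, SPu (N+1) (2*j+1) = 0 := by
        intro j
        induction j with
        | zero =>
          have h0 : pu (N+1) 0 = -pu N 0 := by
            rw [pu_succ_zero, neg_one_pow_odd hNo]; ring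
          have h1 : pu (N+1) 1 = pu N 0 - pu N 1 := by
            have h := pu_succ_mid N 1 le_rfl hN1le
            rw [neg_one_pow_odd hNo, show (1:ℕ)-1 = 0 from rfl, pow_zero, one_mul,
              SPu_zero] at h
            rw [h]
            ring
          have h2 : pu N 1 = 0 := ih3 hNo 1 rfl
          show SPu (N+1) (2*0+1) = 0
          rw [show (2*0+1:ℕ) = 0 + 1 from rfl, SPu_succ, SPu_zero, h0, h1, h2]
          ring
        | succ j ihj =>
          have expand : SPu (N+1) (2*(j+1)+1)
              = SPu (N+1) (2*j+1) + pu (N+1) (2*j+2) + pu (N+1) (2*j+3) := by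
            rw [show 2*(j+1)+1 = (2*j+2)+1 by ring, SPu_succ,
              show 2*j+2 = (2*j+1)+1 by ring, SPu_succ]
          rcases le_or_gt (2*j+3) N with hle | hgt
          · have e1 : pu (N+1) (2*j+2)
                = -SPu N (2*j+1) - pu N (2*j+2) := by
              rw [pu_succ_mid N (2*j+2) (by omega) (by omega),
                show 2*j+2-1 = 2*j+1 by omega,
                neg_one_pow_odd (by omega), neg_one_pow_odd hNo]
              ring
            have e2 : pu (N+1) (2*j+3)
                = SPu N (2*j+2) - pu N (2*j+3) := by
              rw [pu_succ_mid N (2*j+3) (by omega) hle,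
                show 2*j+3-1 = 2*j+2 by omega,
                neg_one_pow_even (by omega), neg_one_pow_odd hNo]
              ring
            have e3 : SPu N (2*j+2) = SPu N (2*j+1) + pu N (2*j+2) := by
              rw [show 2*j+2 = (2*j+1)+1 by ring, SPu_succ]
            have e4 : pu N (2*j+3) = 0 := ih3 hNo _ (by omega)
            rw [expand, ihj, e1, e2, e3, e4]
            ring
          · have e1 : pu (N+1) (2*j+2) = 0 := pu_supp _ _ (by omega) (by omega)
            have e2 : pu (N+1) (2*j+3) = 0 := pu_supp _ _ (by omega) (by omega)
            rw [expand, ihj, e1, e2]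
            ring
      obtain ⟨j, rfl⟩ : ∃ j, k = 2*j+1 := ⟨k/2, by omega⟩
      exact key j
    have H1 : ∀ w, w ≤ N+1 → tu (N+1) w = tv (N+1) (N+1-w) := by
      intro w hw
      rcases Nat.eq_zero_or_pos w with rfl | hpos
      · rw [tu_succ_zero, Nat.sub_zero, tv_succ_mid N (N+1) (by omega) le_rfl,
          Nat.add_sub_cancel]
        have := STv_reindex N 0 (by omega) ih1
        rw [Nat.sub_zero] at this
        rw [this, STu_zero]
      rcases eq_or_lt_of_le hw with rfl | hlt
      · rw [tu_supp (N+1) (N+1) le_rfl (by omega), Nat.sub_self,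
          tv_supp_zero (N+1) (by omega)]
      · have hle : w ≤ N := by omega
        obtain ⟨w', rfl⟩ : ∃ w', w = w' + 1 := ⟨w - 1, by omega⟩
        rw [tu_succ_mid N (w'+1) (by omega) hle, Nat.add_sub_cancel]
        rw [show N+1-(w'+1) = (N-w')-1+1 by omega]
        rw [tv_succ_mid N ((N-w')-1+1) (by omega) (by omega), Nat.add_sub_cancel]
        rw [show (N-w')-1 = N-(w'+1) by omega]
        rw [STv_reindex N (w'+1) (by omega) ih1, STu_succ]
    have H2 : ∀ w, w ≤ N+1 → pu (N+1) w = pv (N+1) (N+1-w) := by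
      intro w hw
      rcases Nat.eq_zero_or_pos w with rfl | hpos
      · rw [pu_succ_zero, Nat.sub_zero, pv_succ_mid N (N+1) (by omega) le_rfl,
          Nat.add_sub_cancel]
        have := SPv_reindex N 0 (by omega) ih2
        rw [Nat.sub_zero] at this
        rw [this, SPu_zero]
      rcases eq_or_lt_of_le hw with rfl | hlt
      · rw [pu_supp (N+1) (N+1) le_rfl (by omega), Nat.sub_self,
          pv_supp_zero (N+1) (by omega)]
      · have hle : w ≤ N := by omega
        obtain ⟨w', rfl⟩ : ∃ w', w = w' + 1 := ⟨w - 1, by omega⟩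
        rw [pu_succ_mid N (w'+1) (by omega) hle, Nat.add_sub_cancel]
        rw [show N+1-(w'+1) = (N-w')-1+1 by omega]
        rw [pv_succ_mid N ((N-w')-1+1) (by omega) (by omega), Nat.add_sub_cancel]
        rw [show (N-w')-1 = N-(w'+1) by omega]
        rw [SPv_reindex N (w'+1) (by omega) ih2, SPu_succ]
        -- goal : (-1)^w' * SPu N w' + (-1)^N * pu N (w'+1)
        --      = (-1)^(N-(w'+1)) * (SPu N w' + pu N (w'+1))
        rcases Nat.even_or_odd N with hN | hN
        · have hN2 : N % 2 = 0 := Nat.even_iff.mp hN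
          have hNne : N ≠ 0 := by omega
          rcases Nat.even_or_odd w' with hw' | hw'
          · have hw2 : w' % 2 = 0 := Nat.even_iff.mp hw'
            rw [neg_one_pow_even hw2, neg_one_pow_even hN2,
              neg_one_pow_odd (by omega)]
            have : SPu N (w'+1) = 0 := ih4 hN2 hNne (w'+1) (by omega)
            rw [SPu_succ] at this
            linarith
          · have hw2 : w' % 2 = 1 := Nat.odd_iff.mp hw'
            rw [neg_one_pow_odd hw2, neg_one_pow_even hN2,
              neg_one_pow_even (by omega)]
            have : SPu N w' = 0 := ih4 hN2 hNne w' hw2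
            linarith
        · have hN2 : N % 2 = 1 := Nat.odd_iff.mp hN
          rcases Nat.even_or_odd w' with hw' | hw'
          · have hw2 : w' % 2 = 0 := Nat.even_iff.mp hw'
            rw [neg_one_pow_even hw2, neg_one_pow_odd hN2,
              neg_one_pow_even (by omega)]
            have : pu N (w'+1) = 0 := ih3 hN2 (w'+1) (by omega)
            rw [this]
            ring
          · have hw2 : w' % 2 = 1 := Nat.odd_iff.mp hw'
            rw [neg_one_pow_odd hw2, neg_one_pow_odd hN2,
              neg_one_pow_odd (by omega)]
            ring
    exact ⟨H1, H2, H3, H4⟩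


-- ===== totals =====

lemma wst_le_all {N : ℕ} (π : Perm (Fin N)) : wst π ≤ N :=
  (wst_le_iff π).2 (Dp_of_big π (by omega))

lemma filter_wst_all (N : ℕ) :
    univ.filter (fun π : Perm (Fin N) => ¬ Has123 π ∧ wst π ≤ N)
      = univ.filter (fun π : Perm (Fin N) => ¬ Has123 π) := by
  apply Finset.filter_congr
  intro π _
  simp [wst_le_all π]

lemma filter_mst_all (N : ℕ) :
    univ.filter (fun π : Perm (Fin N) => ¬ Has312 π ∧ 0 ≤ mst π)
      = univ.filter (fun π : Perm (Fin N) => ¬ Has312 π) := by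
  apply Finset.filter_congr
  intro π _
  simp

lemma STu_total (N : ℕ) :
    STu N N = ((univ.filter fun π : Perm (Fin N) => ¬ Has123 π).card : ℤ) := by
  rw [← sum_one_wst_le N N, filter_wst_all]

lemma SPu_total (N : ℕ) :
    SPu N N = ∑ π ∈ univ.filter (fun π : Perm (Fin N) => ¬ Has123 π), sgn π := by
  rw [← sum_sgn_wst_le N N, filter_wst_all]

lemma STv_total (N : ℕ) :
    STv N 0 = ((univ.filter fun π : Perm (Fin N) => ¬ Has312 π).card : ℤ) := by
  rw [← sum_one_mst_ge N 0, filter_mst_all]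

lemma SPv_total (N : ℕ) :
    SPv N 0 = ∑ π ∈ univ.filter (fun π : Perm (Fin N) => ¬ Has312 π), sgn π := by
  rw [← sum_sgn_mst_ge N 0, filter_mst_all]

lemma totals_eq_T (N : ℕ) : STu N N = STv N 0 := by
  have := STv_reindex N N le_rfl (corr N).1
  rw [Nat.sub_self] at this
  exact this.symm

lemma totals_eq_P (N : ℕ) : SPu N N = SPv N 0 := by
  have := SPv_reindex N N le_rfl (corr N).2.1
  rw [Nat.sub_self] at this
  exact this.symm

-- ===== 2·(even count) = T + P =====

lemma two_mul_even {N : ℕ} (P : Perm (Fin N) → Prop) [DecidablePred P] :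
    ((univ.filter P).card : ℤ) + (∑ π ∈ univ.filter P, sgn π)
      = 2 * ((univ.filter fun π : Perm (Fin N) => Equiv.Perm.sign π = 1 ∧ P π).card : ℤ) := by
  classical
  have h1 : ((univ.filter P).card : ℤ) + (∑ π ∈ univ.filter P, sgn π)
      = ∑ π ∈ univ.filter P, (1 + sgn π) := by
    rw [Finset.sum_add_distrib]
    simp
  rw [h1]
  rw [← Finset.sum_filter_add_sum_filter_not (univ.filter P)
    (fun π => Equiv.Perm.sign π = 1)]
  have h2 : ∀ π ∈ (univ.filter P).filter (fun π => Equiv.Perm.sign π = 1),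
      (1 : ℤ) + sgn π = 2 := by
    intro π hπ
    simp only [mem_filter] at hπ
    rw [sgn, hπ.2]
    norm_num
  have h3 : ∀ π ∈ (univ.filter P).filter (fun π => ¬ Equiv.Perm.sign π = 1),
      (1 : ℤ) + sgn π = 0 := by
    intro π hπ
    simp only [mem_filter] at hπ
    rcases Int.units_eq_one_or (Equiv.Perm.sign π) with h | h
    · exact absurd h hπ.2
    · rw [sgn, h]
      norm_num
  rw [Finset.sum_congr rfl h2, Finset.sum_congr rfl h3]
  rw [Finset.sum_const, Finset.sum_const]
  have h4 : (univ.filter P).filter (fun π => Equiv.Perm.sign π = 1)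
      = univ.filter (fun π : Perm (Fin N) => Equiv.Perm.sign π = 1 ∧ P π) := by
    rw [Finset.filter_filter]
    apply Finset.filter_congr
    intro π _
    tauto
  rw [h4]
  push_cast
  ring

theorem card_eq (N : ℕ) :
    (univ.filter fun π : Perm (Fin N) => Equiv.Perm.sign π = 1 ∧ ¬ Has123 π).card
      = (univ.filter fun π : Perm (Fin N) => Equiv.Perm.sign π = 1 ∧ ¬ Has312 π).card := by
  have h123 := two_mul_even (fun π : Perm (Fin N) => ¬ Has123 π)
  have h312 := two_mul_even (fun π : Perm (Fin N) => ¬ Has312 π)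
  rw [← STu_total, ← SPu_total] at h123
  rw [← STv_total, ← SPv_total] at h312
  rw [totals_eq_T, totals_eq_P] at h123
  have := h123.symm.trans h312
  have h2 : ((univ.filter fun π : Perm (Fin N) => Equiv.Perm.sign π = 1 ∧ ¬ Has123 π).card : ℤ)
      = ((univ.filter fun π : Perm (Fin N) => Equiv.Perm.sign π = 1 ∧ ¬ Has312 π).card : ℤ) := by
    linarith
  exact_mod_cast h2

-- ===== eav bridges =====

instance containsDec {k N : ℕ} (σ : Perm (Fin k)) :
    DecidablePred (fun π : Perm (Fin N) => Pattern.Contains σ π) := fun π => by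
  unfold Pattern.Contains StrictMono
  infer_instance

instance avoidsDec {k N : ℕ} (σ : Perm (Fin k)) :
    DecidablePred (fun π : Perm (Fin N) => Pattern.Avoids σ π) := fun π => by
  unfold Pattern.Avoids
  infer_instance

lemma eav_123 (N : ℕ) :
    eav N p123
      = (univ.filter fun π : Perm (Fin N) => Equiv.Perm.sign π = 1 ∧ ¬ Has123 π).card := by
  rw [eav, Nat.card_eq_fintype_card]
  rw [Fintype.card_subtype]
  congr 1
  apply Finset.filter_congr
  intro π _
  rw [Pattern.Avoids, contains123_iff]

lemma eav_312 (N : ℕ) :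
    eav N p312
      = (univ.filter fun π : Perm (Fin N) => Equiv.Perm.sign π = 1 ∧ ¬ Has312 π).card := by
  rw [eav, Nat.card_eq_fintype_card]
  rw [Fintype.card_subtype]
  congr 1
  apply Finset.filter_congr
  intro π _
  rw [Pattern.Avoids, contains312_iff]

theorem eav_123_eq_312 (N : ℕ) : eav N p123 = eav N p312 := by
  rw [eav_123, eav_312, card_eq]

theorem eav_312_eq_231 (N : ℕ) : eav N p312 = eav N p231 := by
  apply Nat.card_congr
  refine Equiv.subtypeEquiv (Equiv.inv (Perm (Fin N))) ?_
  intro π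
  simp only [Equiv.inv_apply]
  constructor
  · rintro ⟨hs, ha⟩
    refine ⟨by simp [hs], ?_⟩
    intro hc
    apply ha
    have := contains_inv p231 π⁻¹ hc
    rw [inv_inv, ← p312_inv, inv_inv] at this
    exact this
  · rintro ⟨hs, ha⟩
    refine ⟨by simpa using hs, ?_⟩
    intro hc
    apply ha
    have := contains_inv p312 π hc
    rw [p312_inv] at this
    exact this

end EW

/-- The patterns 123, 312, 231 are pairwise even-Wilf-equivalent. -/
theorem stmt7 :
    (∀ n : ℕ, eav n p123 = eav n p312) ∧
      (∀ n : ℕ, eav n p123 = eav n p231) ∧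
      (∀ n : ℕ, eav n p312 = eav n p231) := by
  refine ⟨EW.eav_123_eq_312, ?_, EW.eav_312_eq_231⟩
  intro n
  rw [EW.eav_123_eq_312 n, EW.eav_312_eq_231 n]
end

section
/- Let α and β be patterns of the same length that are both even-shape-Wilf-equivalent and shape-Wilf-equivalent. Then for every pattern σ, the patterns α⊕σ and β⊕σ are even-shape-Wilf-equivalent. -/
/-- A transversal `π` of the Young diagram with row lengths `lam` (row `v`, 0-indexed, has
`lam v` cells) contains the pattern `σ` if some strictly increasing choice of columns carries
an order-isomorphic copy of `σ` whose rows and columns all lie in a full `k × k` square of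
cells of the diagram: every cell `(row π (f b), column f a)` belongs to the diagram. -/
def TransversalContains {n k : ℕ} (lam : Fin n → ℕ) (σ : Equiv.Perm (Fin k))
    (π : Equiv.Perm (Fin n)) : Prop :=
  ∃ f : Fin k → Fin n, StrictMono f ∧ (∀ a b : Fin k, π (f a) < π (f b) ↔ σ a < σ b) ∧
    ∀ a b : Fin k, (f a : ℕ) + 1 ≤ lam (π (f b))

/-- `π` is a transversal of the Young diagram with row lengths `lam`: the point of each
value `v` lies in a cell of row `v`, i.e. `π⁻¹(v) ≤ λ_v` (1-indexed). -/
def IsTransversal {n : ℕ} (lam : Fin n → ℕ) (π : Equiv.Perm (Fin n)) : Prop :=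
  ∀ v : Fin n, (π.symm v : ℕ) + 1 ≤ lam v

/-- The number of even transversals of the Young diagram `lam` avoiding `σ`. -/
noncomputable def eavShape {n k : ℕ} (lam : Fin n → ℕ) (σ : Equiv.Perm (Fin k)) : ℕ :=
  Nat.card {π : Equiv.Perm (Fin n) //
    IsTransversal lam π ∧ Equiv.Perm.sign π = 1 ∧ ¬ TransversalContains lam σ π}

/-- The number of all transversals of the Young diagram `lam` avoiding `σ`. -/
noncomputable def savShape {n k : ℕ} (lam : Fin n → ℕ) (σ : Equiv.Perm (Fin k)) : ℕ :=
  Nat.card {π : Equiv.Perm (Fin n) //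
    IsTransversal lam π ∧ ¬ TransversalContains lam σ π}

/-- Even-shape-Wilf-equivalence: equal counts of even avoiding transversals for every
Young diagram (an antitone sequence of row lengths). -/
def EvenShapeWilfEquiv {k : ℕ} (σ τ : Equiv.Perm (Fin k)) : Prop :=
  ∀ (n : ℕ) (lam : Fin n → ℕ), Antitone lam → eavShape lam σ = eavShape lam τ

/-- Shape-Wilf-equivalence: equal counts of avoiding transversals for every Young diagram. -/
def ShapeWilfEquiv {k : ℕ} (σ τ : Equiv.Perm (Fin k)) : Prop :=
  ∀ (n : ℕ) (lam : Fin n → ℕ), Antitone lam → savShape lam σ = savShape lam τ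

/-- The direct sum `α ⊕ σ`: `α` acting on the first `k` letters and a shifted copy of `σ`
acting on the last `m` letters. -/
def directSum {k m : ℕ} (α : Equiv.Perm (Fin k)) (σ : Equiv.Perm (Fin m)) :
    Equiv.Perm (Fin (k + m)) :=
  finSumFinEquiv.symm.trans ((Equiv.sumCongr α σ).trans finSumFinEquiv)

namespace S9
open Equiv

variable {n k m : ℕ}

/-- cell `(v,c)` is white: it is in the diagram and there is a full σ-copy strictly NE of it. -/
def White (lam : Fin n → ℕ) (σ : Perm (Fin m)) (π : Perm (Fin n)) (v c : Fin n) : Prop :=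
  (c : ℕ) + 1 ≤ lam v ∧ ∃ g : Fin m → Fin n, StrictMono g ∧
    (∀ a b, π (g a) < π (g b) ↔ σ a < σ b) ∧
    (∀ a b, (g a : ℕ) + 1 ≤ lam (π (g b))) ∧ (∀ x, c < g x ∧ v < π (g x))

open Classical in
/-- the outside data of a transversal: `none` on white points. -/
noncomputable def Phi (lam : Fin n → ℕ) (σ : Perm (Fin m)) (π : Perm (Fin n)) :
    Fin n → Option (Fin n) :=
  fun c => if White lam σ π (π c) c then none else some (π c)

/-- whiteness certified using only points recorded in outside data `F`. -/
def OutCert (lam : Fin n → ℕ) (σ : Perm (Fin m)) (F : Fin n → Option (Fin n))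
    (v c : Fin n) : Prop :=
  (c : ℕ) + 1 ≤ lam v ∧ ∃ g w : Fin m → Fin n, (∀ x, F (g x) = some (w x)) ∧ StrictMono g ∧
    (∀ a b, w a < w b ↔ σ a < σ b) ∧
    (∀ a b, (g a : ℕ) + 1 ≤ lam (w b)) ∧ (∀ x, c < g x ∧ v < w x)

lemma isTransversal_iff_col (lam : Fin n → ℕ) (π : Perm (Fin n)) :
    IsTransversal lam π ↔ ∀ c : Fin n, (c : ℕ) + 1 ≤ lam (π c) := by
  constructor
  · intro h c; simpa using h (π c)
  · intro h v; simpa using h (π.symm v)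

lemma phi_eq_none_iff {lam : Fin n → ℕ} {σ : Perm (Fin m)} {π : Perm (Fin n)} {c : Fin n} :
    Phi lam σ π c = none ↔ White lam σ π (π c) c := by
  unfold Phi; split <;> simp_all

lemma phi_eq_some {lam : Fin n → ℕ} {σ : Perm (Fin m)} {π : Perm (Fin n)} {c v : Fin n}
    (h : Phi lam σ π c = some v) : π c = v ∧ ¬ White lam σ π (π c) c := by
  unfold Phi at h; split at h <;> simp_all

lemma white_of_outCert {lam : Fin n → ℕ} {σ : Perm (Fin m)} {π : Perm (Fin n)}
    {F : Fin n → Option (Fin n)} (hcomp : ∀ x v', F x = some v' → π x = v') {v c : Fin n}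
    (h : OutCert lam σ F v c) : White lam σ π v c := by
  obtain ⟨hcell, g, w, hF, hg, hiso, hsq, hne⟩ := h
  have hw : ∀ x, π (g x) = w x := fun x => hcomp _ _ (hF x)
  exact ⟨hcell, g, hg, by simp only [hw]; exact hiso, by simp only [hw]; exact hsq,
    by simp only [hw]; exact hne⟩

lemma exists_blue_cert {lam : Fin n → ℕ} {σ : Perm (Fin m)} {π : Perm (Fin n)} {v c : Fin n}
    (h : ∃ g : Fin m → Fin n, StrictMono g ∧ (∀ a b, π (g a) < π (g b) ↔ σ a < σ b) ∧
      (∀ a b, (g a : ℕ) + 1 ≤ lam (π (g b))) ∧ (∀ x, c < g x ∧ v < π (g x))) :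
    ∃ g : Fin m → Fin n, StrictMono g ∧ (∀ a b, π (g a) < π (g b) ↔ σ a < σ b) ∧
      (∀ a b, (g a : ℕ) + 1 ≤ lam (π (g b))) ∧ (∀ x, c < g x ∧ v < π (g x)) ∧
      (∀ x, ¬ White lam σ π (π (g x)) (g x)) := by
  obtain hm | hm := Nat.eq_zero_or_pos m
  · subst hm
    obtain ⟨g, h1, h2, h3, h4⟩ := h
    exact ⟨g, h1, h2, h3, h4, fun x => x.elim0⟩
  · set z : Fin m := ⟨0, hm⟩ with hz
    suffices H : ∀ d (g : Fin m → Fin n), StrictMono g → (∀ a b, π (g a) < π (g b) ↔ σ a < σ b) →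
        (∀ a b, (g a : ℕ) + 1 ≤ lam (π (g b))) → (∀ x, c < g x ∧ v < π (g x)) →
        n ≤ (g z : ℕ) + d →
        ∃ g : Fin m → Fin n, StrictMono g ∧ (∀ a b, π (g a) < π (g b) ↔ σ a < σ b) ∧
          (∀ a b, (g a : ℕ) + 1 ≤ lam (π (g b))) ∧ (∀ x, c < g x ∧ v < π (g x)) ∧
          (∀ x, ¬ White lam σ π (π (g x)) (g x)) by
      obtain ⟨g, h1, h2, h3, h4⟩ := h
      exact H n g h1 h2 h3 h4 (by omega)
    intro d
    induction d with
    | zero => intro g _ _ _ _ hle; have := (g z).isLt; omega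
    | succ d ih =>
      intro g h1 h2 h3 h4 hle
      by_cases hw : ∃ x, White lam σ π (π (g x)) (g x)
      · obtain ⟨x, _, g', hg1, hg2, hg3, hg4⟩ := hw
        have hgx : ∀ y, g x < g' y ∧ π (g x) < π (g' y) := hg4
        refine ih g' hg1 hg2 hg3 (fun y => ⟨lt_trans (h4 x).1 (hgx y).1,
          lt_trans (h4 x).2 (hgx y).2⟩) ?_
        have hzx : (g z : ℕ) ≤ g x :=
          h1.monotone (by simp [hz, Fin.le_def])
        have := (hgx z).1
        omega
      · push_neg at hw
        exact ⟨g, h1, h2, h3, h4, hw⟩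



lemma white_iff_outCert {lam : Fin n → ℕ} {σ : Perm (Fin m)} {π : Perm (Fin n)} (v c : Fin n) :
    White lam σ π v c ↔ OutCert lam σ (Phi lam σ π) v c := by
  constructor
  · rintro ⟨hcell, hg⟩
    obtain ⟨g, h1, h2, h3, h4, h5⟩ := exists_blue_cert hg
    refine ⟨hcell, g, fun x => π (g x), ?_, h1, h2, h3, h4⟩
    intro x
    unfold Phi
    rw [if_neg (h5 x)]
  · intro h
    refine white_of_outCert (fun x v' hx => (phi_eq_some hx).1) h

lemma outCert_mono {lam : Fin n → ℕ} (hlam : Antitone lam) {σ : Perm (Fin m)}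
    {F : Fin n → Option (Fin n)} {v c v' c' : Fin n} (hv : v' ≤ v) (hc : c' ≤ c)
    (h : OutCert lam σ F v c) : OutCert lam σ F v' c' := by
  obtain ⟨hcell, g, w, hF, hg, hiso, hsq, hne⟩ := h
  refine ⟨le_trans (by omega) (le_trans hcell (hlam hv)), g, w, hF, hg, hiso, hsq,
    fun x => ⟨lt_of_le_of_lt hc (hne x).1, lt_of_le_of_lt hv (hne x).2⟩⟩

/-- a down-closed subset of `Fin t` is an initial segment. -/
lemma mem_iff_lt_card {t : ℕ} {S : Finset (Fin t)}
    (hdc : ∀ j' j : Fin t, j' ≤ j → j ∈ S → j' ∈ S) (j : Fin t) :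
    j ∈ S ↔ (j : ℕ) < S.card := by
  constructor
  · intro hj
    have hsub : Finset.Iic j ⊆ S := fun x hx => hdc x j (Finset.mem_Iic.mp hx) hj
    have := Finset.card_le_card hsub
    rw [Fin.card_Iic] at this
    omega
  · intro hj
    by_contra hjS
    have hsub : S ⊆ Finset.Iio j := by
      intro x hx
      rw [Finset.mem_Iio]
      by_contra hxj
      exact hjS (hdc j x (le_of_not_gt hxj) hx)
    have := Finset.card_le_card hsub
    rw [Fin.card_Iio] at this
    omega

lemma nat_card_fiberwise {X D : Type*} [Fintype X] [Fintype D] (P : X → Prop) (Φ : X → D) :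
    Nat.card {x // P x} = ∑ F : D, Nat.card {x // P x ∧ Φ x = F} := by
  classical
  have e1 : {x // P x} ≃ (F : D) × {x : {x // P x} // Φ x.1 = F} :=
    (Equiv.sigmaFiberEquiv (fun x : {x // P x} => Φ x.1)).symm
  rw [Nat.card_congr e1, Nat.card_eq_fintype_card, Fintype.card_sigma]
  refine Finset.sum_congr rfl fun F _ => ?_
  rw [← Nat.card_eq_fintype_card]
  exact Nat.card_congr (Equiv.subtypeSubtypeEquivSubtypeInter P (fun x => Φ x = F))

lemma nat_card_split_sign {t : ℕ} (P : Perm (Fin t) → Prop) :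
    Nat.card {π : Perm (Fin t) // P π} =
      Nat.card {π : Perm (Fin t) // P π ∧ Equiv.Perm.sign π = 1} +
      Nat.card {π : Perm (Fin t) // P π ∧ Equiv.Perm.sign π = -1} := by
  classical
  classical
  simp only [Nat.card_eq_fintype_card, Fintype.card_subtype]
  rw [← Finset.card_union_of_disjoint ?dis]
  case dis =>
    rw [Finset.disjoint_left]
    intro a ha hb
    rw [Finset.mem_filter] at ha hb
    rw [ha.2.2] at hb
    exact absurd hb.2.2 (by decide)
  congr 1
  ext π
  simp only [Finset.mem_union, Finset.mem_filter, Finset.mem_univ, true_and]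
  rcases Int.units_eq_one_or (Equiv.Perm.sign π) with hs | hs <;> simp [hs]


lemma directSum_castAdd {α : Perm (Fin k)} {σ : Perm (Fin m)} (a : Fin k) :
    directSum α σ (Fin.castAdd m a) = Fin.castAdd m (α a) := by
  simp only [directSum, Equiv.trans_apply, finSumFinEquiv_symm_apply_castAdd,
    Equiv.sumCongr_apply, Sum.map_inl, finSumFinEquiv_apply_left]

lemma directSum_natAdd {α : Perm (Fin k)} {σ : Perm (Fin m)} (x : Fin m) :
    directSum α σ (Fin.natAdd k x) = Fin.natAdd k (σ x) := by
  simp only [directSum, Equiv.trans_apply, finSumFinEquiv_symm_apply_natAdd,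
    Equiv.sumCongr_apply, Sum.map_inr, finSumFinEquiv_apply_right]

lemma fin_add_cases {k m : ℕ} (i : Fin (k + m)) :
    (∃ a : Fin k, i = Fin.castAdd m a) ∨ ∃ x : Fin m, i = Fin.natAdd k x := by
  rcases lt_or_ge (i : ℕ) k with h | h
  · exact Or.inl ⟨⟨i, h⟩, by ext; simp⟩
  · refine Or.inr ⟨⟨(i : ℕ) - k, by omega⟩, by ext; simp; omega⟩

lemma castAdd_lt_castAdd {a b : Fin k} : Fin.castAdd m a < Fin.castAdd m b ↔ a < b := by
  rw [Fin.lt_def, Fin.lt_def]; simp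

lemma natAdd_lt_natAdd {a b : Fin m} : Fin.natAdd k a < Fin.natAdd k b ↔ a < b := by
  rw [Fin.lt_def, Fin.lt_def]; simp

lemma castAdd_lt_natAdd {a : Fin k} {x : Fin m} : Fin.castAdd m a < Fin.natAdd k x := by
  rw [Fin.lt_def]; simp; omega

/-- Key lemma: containment of a direct sum `α ⊕ σ` is equivalent to an `α`-copy all of
whose cells are white (w.r.t. `σ`). -/
lemma contains_directSum_iff {lam : Fin n → ℕ} (hlam : Antitone lam) (hk : 0 < k)
    (α : Perm (Fin k)) (σ : Perm (Fin m)) (π : Perm (Fin n)) :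
    TransversalContains lam (directSum α σ) π ↔
      ∃ e : Fin k → Fin n, StrictMono e ∧ (∀ a b, π (e a) < π (e b) ↔ α a < α b) ∧
        ∀ a b, White lam σ π (π (e b)) (e a) := by
  constructor
  · rintro ⟨f, hf, hiso, hsq⟩
    refine ⟨fun a => f (Fin.castAdd m a), fun a b hab => hf (castAdd_lt_castAdd.mpr hab),
      fun a b => ?_, fun a b => ?_⟩
    · rw [hiso (Fin.castAdd m a) (Fin.castAdd m b), directSum_castAdd, directSum_castAdd,
        castAdd_lt_castAdd]
    · refine ⟨hsq (Fin.castAdd m a) (Fin.castAdd m b), fun x => f (Fin.natAdd k x),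
        fun x y hxy => hf (natAdd_lt_natAdd.mpr hxy), fun x y => ?_, fun x y =>
        hsq (Fin.natAdd k x) (Fin.natAdd k y), fun x => ⟨hf castAdd_lt_natAdd, ?_⟩⟩
      · rw [hiso (Fin.natAdd k x) (Fin.natAdd k y), directSum_natAdd, directSum_natAdd,
          natAdd_lt_natAdd]
      · rw [hiso (Fin.castAdd m b) (Fin.natAdd k x), directSum_castAdd, directSum_natAdd]
        exact castAdd_lt_natAdd
  · rintro ⟨e, he, hiso, hW⟩
    set amax : Fin k := ⟨k - 1, by omega⟩ with hamax
    set bmax : Fin k := α.symm ⟨k - 1, by omega⟩ with hbmax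
    have hea : ∀ a : Fin k, e a ≤ e amax := fun a =>
      he.monotone (by rw [Fin.le_def]; simp [hamax]; omega)
    have heb : ∀ b : Fin k, π (e b) ≤ π (e bmax) := by
      intro b
      refine le_of_not_gt (fun hlt => ?_)
      rw [hiso bmax b] at hlt
      rw [hbmax] at hlt
      simp only [Equiv.apply_symm_apply] at hlt
      rw [Fin.lt_def] at hlt
      have := (α b).isLt
      simp at hlt
      omega
    obtain ⟨hcell, g, hg, hgiso, hgsq, hgne⟩ := hW amax bmax
    have heg : ∀ (a : Fin k) (x : Fin m), e a < g x := fun a x =>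
      lt_of_le_of_lt (hea a) (hgne x).1
    have hebg : ∀ (b : Fin k) (x : Fin m), π (e b) < π (g x) := fun b x =>
      lt_of_le_of_lt (heb b) (hgne x).2
    refine ⟨Fin.addCases e g, ?_, ?_, ?_⟩
    · intro i j hij
      rcases fin_add_cases i with ⟨a, rfl⟩ | ⟨x, rfl⟩ <;>
        rcases fin_add_cases j with ⟨b, rfl⟩ | ⟨y, rfl⟩ <;>
        simp only [Fin.addCases_left, Fin.addCases_right]
      · exact he (castAdd_lt_castAdd.mp hij)
      · exact heg a y
      · exact absurd hij (by rw [Fin.lt_def]; simp; omega)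
      · exact hg (natAdd_lt_natAdd.mp hij)
    · intro i j
      rcases fin_add_cases i with ⟨a, rfl⟩ | ⟨x, rfl⟩ <;>
        rcases fin_add_cases j with ⟨b, rfl⟩ | ⟨y, rfl⟩ <;>
        simp only [Fin.addCases_left, Fin.addCases_right, directSum_castAdd, directSum_natAdd]
      · rw [castAdd_lt_castAdd]; exact hiso a b
      · simp only [castAdd_lt_natAdd, iff_true]; exact hebg a y
      · constructor
        · intro h; exact absurd h (not_lt.mpr (le_of_lt (hebg b x)))
        · intro h; exact absurd h (by rw [Fin.lt_def]; simp; omega)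
      · rw [natAdd_lt_natAdd]; exact hgiso x y
    · intro i j
      rcases fin_add_cases i with ⟨a, rfl⟩ | ⟨x, rfl⟩ <;>
        rcases fin_add_cases j with ⟨b, rfl⟩ | ⟨y, rfl⟩ <;>
        simp only [Fin.addCases_left, Fin.addCases_right]
      · exact (hW a b).1
      · have h1 := heg a y
        have h2 := hgsq y y
        rw [Fin.lt_def] at h1
        omega
      · have h1 := hgsq x x
        have h2 : lam (π (g x)) ≤ lam (π (e b)) := hlam (le_of_lt (hebg b x))
        omega
      · exact hgsq x y


def InC {n : ℕ} (F : Fin n → Option (Fin n)) : Finset (Fin n) :=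
  Finset.univ.filter (fun c => F c = none)

def RInF {n : ℕ} (F : Fin n → Option (Fin n)) : Finset (Fin n) :=
  Finset.univ.filter (fun v => ∀ c, F c ≠ some v)

/-- A shape with a fixed outside data `F` realized by at least one transversal `T₀`. -/
structure Setup {n m : ℕ} (lam : Fin n → ℕ) (σ : Perm (Fin m)) where
  F : Fin n → Option (Fin n)
  T₀ : Perm (Fin n)
  hT : IsTransversal lam T₀
  hF : Phi lam σ T₀ = F

namespace Setup

variable {lam : Fin n → ℕ} {σ : Perm (Fin m)} (S : Setup lam σ)

lemma mem_inC_iff (c : Fin n) : c ∈ InC S.F ↔ S.F c = none := by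
  simp [InC]

lemma F_of_not_inC {c : Fin n} (h : c ∉ InC S.F) : S.F c = some (S.T₀ c) := by
  rw [mem_inC_iff] at h
  rw [← S.hF] at h ⊢
  unfold Phi at h ⊢
  split at h
  · exact absurd rfl h
  · rw [if_neg (by assumption)]

lemma mem_rin_iff (v : Fin n) : v ∈ RInF S.F ↔ ∀ c, S.F c ≠ some v := by
  simp [RInF]

lemma map_mem : ∀ c, c ∈ InC S.F ↔ S.T₀ c ∈ RInF S.F := by
  intro c
  rw [mem_inC_iff, mem_rin_iff]
  constructor
  · intro hc c' hc'
    rw [← S.hF] at hc'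
    obtain ⟨h1, _⟩ := phi_eq_some hc'
    have : c' = c := S.T₀.injective h1
    subst this
    rw [S.hF] at hc'
    rw [hc] at hc'
    exact nomatch hc'
  · intro hv
    have hvc := hv c
    rw [← S.hF] at hvc
    by_cases hw : White lam σ S.T₀ (S.T₀ c) c
    · rw [← S.hF]; unfold Phi; rw [if_pos hw]
    · exact absurd (by unfold Phi; rw [if_neg hw]) hvc

lemma rin_card : (RInF S.F).card = (InC S.F).card := by
  have himg : RInF S.F = (InC S.F).image S.T₀ := by
    ext v
    rw [Finset.mem_image]
    constructor
    · intro hv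
      refine ⟨S.T₀.symm v, ?_, by simp⟩
      rw [S.map_mem]
      simpa using hv
    · rintro ⟨c, hc, rfl⟩
      exact (S.map_mem c).mp hc
  rw [himg, Finset.card_image_of_injective _ S.T₀.injective]

/-- number of inside columns. -/
def t : ℕ := (InC S.F).card

noncomputable def ec : Fin S.t ≃o {x // x ∈ InC S.F} := (InC S.F).orderIsoOfFin rfl

noncomputable def er : Fin S.t ≃o {x // x ∈ RInF S.F} := (RInF S.F).orderIsoOfFin S.rin_card

open Classical in
/-- the inner shape. -/
noncomputable def nu : Fin S.t → ℕ := fun i =>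
  (Finset.univ.filter (fun j : Fin S.t => OutCert lam σ S.F ↑(S.er i) ↑(S.ec j))).card

lemma lt_nu_iff (hlam : Antitone lam) (i j : Fin S.t) :
    (j : ℕ) < S.nu i ↔ OutCert lam σ S.F ↑(S.er i) ↑(S.ec j) := by
  classical
  have hdc : ∀ j' j : Fin S.t, j' ≤ j →
      j ∈ (Finset.univ.filter (fun j : Fin S.t => OutCert lam σ S.F ↑(S.er i) ↑(S.ec j))) →
      j' ∈ (Finset.univ.filter (fun j : Fin S.t => OutCert lam σ S.F ↑(S.er i) ↑(S.ec j))) := by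
    intro j' j hle hj
    rw [Finset.mem_filter] at hj ⊢
    refine ⟨Finset.mem_univ _, outCert_mono hlam le_rfl ?_ hj.2⟩
    exact Subtype.coe_le_coe.mpr (S.ec.monotone hle)
  have := (mem_iff_lt_card hdc j).symm
  rw [Finset.mem_filter] at this
  unfold nu
  constructor
  · intro h
    exact ((by convert this using 2; unfold nu; convert rfl : (j:ℕ) < S.nu i ↔ _ ∧ _).mp h).2
  · intro h
    exact (this.mpr ⟨Finset.mem_univ _, h⟩)

lemma nu_antitone (hlam : Antitone lam) : Antitone S.nu := by
  classical
  intro i i' hle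
  unfold nu
  refine Finset.card_le_card ?_
  intro j hj
  rw [Finset.mem_filter] at hj ⊢
  exact ⟨hj.1, outCert_mono hlam (Subtype.coe_le_coe.mpr (S.er.monotone hle)) le_rfl hj.2⟩


/-- the inside part of the base transversal `T₀`. -/
noncomputable def rho0 : Perm (Fin S.t) :=
  S.ec.toEquiv.trans ((S.T₀.subtypeEquiv S.map_mem).trans S.er.symm.toEquiv)

lemma T0_ec (x : Fin S.t) : S.T₀ ↑(S.ec x) = ↑(S.er (S.rho0 x)) := by
  show S.T₀ ↑(S.ec x) =
    ↑(S.er (S.er.symm.toEquiv ((S.T₀.subtypeEquiv S.map_mem) (S.ec.toEquiv x))))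
  rw [show (S.er.symm.toEquiv ((S.T₀.subtypeEquiv S.map_mem) (S.ec.toEquiv x)))
    = S.er.symm ((S.T₀.subtypeEquiv S.map_mem) (S.ec.toEquiv x)) from rfl]
  rw [OrderIso.apply_symm_apply]
  rcases h : S.ec.toEquiv x with ⟨a, ha⟩
  rw [Equiv.subtypeEquiv_apply]

/-- the sign correction factor of the outside part. -/
noncomputable def eps : ℤˣ :=
  Equiv.Perm.sign S.T₀ * (Equiv.Perm.sign S.rho0)⁻¹

/-- reassemble a transversal from an inside part. -/
noncomputable def G (ρ : Perm (Fin S.t)) : Perm (Fin n) :=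
  S.T₀ * Equiv.Perm.extendDomain (S.rho0⁻¹ * ρ) S.ec.toEquiv

lemma G_apply_inC (ρ : Perm (Fin S.t)) (j : Fin S.t) :
    S.G ρ ↑(S.ec j) = ↑(S.er (ρ j)) := by
  unfold G
  rw [Equiv.Perm.mul_apply]
  have h1 : ((S.rho0⁻¹ * ρ).extendDomain S.ec.toEquiv) ↑(S.ec j)
      = ↑(S.ec ((S.rho0⁻¹ * ρ) j)) := by
    have := Equiv.Perm.extendDomain_apply_image (S.rho0⁻¹ * ρ) S.ec.toEquiv j
    exact this
  rw [h1, S.T0_ec]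
  rw [Equiv.Perm.mul_apply]; simp

lemma G_apply_not_inC (ρ : Perm (Fin S.t)) {c : Fin n} (hc : c ∉ InC S.F) :
    S.G ρ c = S.T₀ c := by
  unfold G
  rw [Equiv.Perm.mul_apply, Equiv.Perm.extendDomain_apply_not_subtype _ _ hc]

lemma sign_G (ρ : Perm (Fin S.t)) :
    Equiv.Perm.sign (S.G ρ) = S.eps * Equiv.Perm.sign ρ := by
  unfold G eps
  rw [map_mul, Equiv.Perm.sign_extendDomain, map_mul, map_inv]
  group

lemma G_injective : Function.Injective S.G := by
  intro ρ ρ' h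
  ext j
  have h1 := S.G_apply_inC ρ j
  have h2 := S.G_apply_inC ρ' j
  rw [h] at h1
  rw [h1] at h2
  exact congrArg Fin.val (S.er.injective (Subtype.coe_injective h2))


lemma compat_T0 : ∀ x v', S.F x = some v' → S.T₀ x = v' := by
  intro x v' h
  rw [← S.hF] at h
  exact (phi_eq_some h).1

lemma compat_G {ρ : Perm (Fin S.t)} : ∀ x v', S.F x = some v' → S.G ρ x = v' := by
  intro x v' h
  have hx : x ∉ InC S.F := by
    rw [mem_inC_iff]
    simp [h]
  rw [S.G_apply_not_inC ρ hx]
  exact S.compat_T0 x v' h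

lemma white_G_iff {ρ : Perm (Fin S.t)}
    (hρ : ∀ j, OutCert lam σ S.F ↑(S.er (ρ j)) ↑(S.ec j)) (v c : Fin n) :
    White lam σ (S.G ρ) v c ↔ OutCert lam σ S.F v c := by
  constructor
  · intro h
    rw [white_iff_outCert] at h
    obtain ⟨hcell, g, w, hFg, hg, hiso, hsq, hne⟩ := h
    refine ⟨hcell, g, w, fun x => ?_, hg, hiso, hsq, hne⟩
    have hnx : g x ∉ InC S.F := by
      intro hx
      set j := S.ec.symm ⟨g x, hx⟩ with hj
      have hcj : ↑(S.ec j) = g x := by rw [hj]; simp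
      have hG : S.G ρ (g x) = ↑(S.er (ρ j)) := by rw [← hcj, S.G_apply_inC]
      have hW : White lam σ (S.G ρ) (S.G ρ (g x)) (g x) := by
        refine white_of_outCert S.compat_G ?_
        rw [hG, ← hcj]
        exact hρ j
      exact (phi_eq_some (hFg x)).2 hW
    have h1 := S.F_of_not_inC hnx
    have h2 : S.G ρ (g x) = S.T₀ (g x) := S.G_apply_not_inC ρ hnx
    have h3 := (phi_eq_some (hFg x)).1
    rw [h1, ← h2, h3]
  · exact white_of_outCert S.compat_G

lemma phi_G {ρ : Perm (Fin S.t)}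
    (hρ : ∀ j, OutCert lam σ S.F ↑(S.er (ρ j)) ↑(S.ec j)) :
    Phi lam σ (S.G ρ) = S.F := by
  funext c
  by_cases hc : c ∈ InC S.F
  · set j := S.ec.symm ⟨c, hc⟩ with hj
    have hcj : ↑(S.ec j) = c := by rw [hj]; simp
    have hG : S.G ρ c = ↑(S.er (ρ j)) := by rw [← hcj, S.G_apply_inC]
    have hW : White lam σ (S.G ρ) (S.G ρ c) c := by
      rw [S.white_G_iff hρ, hG, ← hcj]
      exact hρ j
    unfold Phi
    rw [if_pos hW]
    exact ((S.mem_inC_iff c).mp hc).symm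
  · have hG : S.G ρ c = S.T₀ c := S.G_apply_not_inC ρ hc
    have hnW : ¬ White lam σ (S.G ρ) (S.G ρ c) c := by
      rw [S.white_G_iff hρ, hG]
      intro hOC
      have hwt : White lam σ S.T₀ (S.T₀ c) c := white_of_outCert S.compat_T0 hOC
      have h0 := phi_eq_none_iff.mpr hwt
      rw [S.hF] at h0
      exact hc ((S.mem_inC_iff _).mpr h0)
    unfold Phi
    rw [if_neg hnW, hG]
    exact (S.F_of_not_inC hc).symm

lemma outCert_of_nu (hlam : Antitone lam) {ρ : Perm (Fin S.t)} (h : IsTransversal S.nu ρ) :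
    ∀ j, OutCert lam σ S.F ↑(S.er (ρ j)) ↑(S.ec j) := by
  intro j
  refine (S.lt_nu_iff hlam (ρ j) j).mp ?_
  have := (isTransversal_iff_col _ _).mp h j
  omega

lemma transversal_G (hlam : Antitone lam) {ρ : Perm (Fin S.t)} (h : IsTransversal S.nu ρ) :
    IsTransversal lam (S.G ρ) := by
  rw [isTransversal_iff_col]
  intro c
  by_cases hc : c ∈ InC S.F
  · set j := S.ec.symm ⟨c, hc⟩ with hj
    have hcj : ↑(S.ec j) = c := by rw [hj]; simp
    have hG : S.G ρ c = ↑(S.er (ρ j)) := by rw [← hcj, S.G_apply_inC]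
    have hOC := S.outCert_of_nu hlam h j
    rw [hG, ← hcj]
    exact hOC.1
  · rw [S.G_apply_not_inC ρ hc]
    exact (isTransversal_iff_col _ _).mp S.hT c

lemma nu_transversal_of (hlam : Antitone lam) {ρ : Perm (Fin S.t)}
    (hTt : IsTransversal lam (S.G ρ)) (hTF : Phi lam σ (S.G ρ) = S.F) :
    IsTransversal S.nu ρ := by
  rw [isTransversal_iff_col]
  intro j
  have hc : (↑(S.ec j) : Fin n) ∈ InC S.F := (S.ec j).2
  have hG : S.G ρ ↑(S.ec j) = ↑(S.er (ρ j)) := S.G_apply_inC ρ j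
  have h0 : Phi lam σ (S.G ρ) ↑(S.ec j) = none := by
    rw [hTF]
    exact (S.mem_inC_iff _).mp hc
  have hW := phi_eq_none_iff.mp h0
  rw [white_iff_outCert, hTF, hG] at hW
  have := (S.lt_nu_iff hlam (ρ j) j).mpr hW
  omega

lemma exists_preimage {T : Perm (Fin n)} (hTF : Phi lam σ T = S.F) :
    ∃ ρ : Perm (Fin S.t), S.G ρ = T := by
  have hagree : ∀ c ∉ InC S.F, T c = S.T₀ c := by
    intro c hc
    have h1 := S.F_of_not_inC hc
    rw [← hTF] at h1
    exact (phi_eq_some h1).1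
  have hmapsto : ∀ c ∈ InC S.F, T c ∈ RInF S.F := by
    intro c hc
    rw [mem_rin_iff]
    intro c' hc'
    have hc2 := hc'
    rw [← hTF] at hc2
    have h2 := (phi_eq_some hc2).1
    have h3 : c' = c := T.injective h2
    rw [h3, (S.mem_inC_iff c).mp hc] at hc'
    exact nomatch hc'
  set δ : Perm (Fin n) := S.T₀⁻¹ * T with hδdef
  have hδfix : ∀ c ∉ InC S.F, δ c = c := by
    intro c hc
    rw [hδdef, Equiv.Perm.mul_apply, hagree c hc]
    exact Equiv.symm_apply_apply _ _
  have hδmem : ∀ c, c ∈ InC S.F ↔ δ c ∈ InC S.F := by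
    intro c
    constructor
    · intro hc
      rw [S.map_mem]
      have h4 : S.T₀ (δ c) = T c := by
        rw [hδdef, Equiv.Perm.mul_apply]
        exact Equiv.apply_symm_apply _ _
      rw [h4]
      exact hmapsto c hc
    · intro hc
      by_contra hcc
      rw [hδfix c hcc] at hc
      exact hcc hc
  set ε : Perm (Fin S.t) :=
    S.ec.toEquiv.trans ((δ.subtypeEquiv hδmem).trans S.ec.symm.toEquiv) with hε
  refine ⟨S.rho0 * ε, ?_⟩
  have hcan : S.rho0⁻¹ * (S.rho0 * ε) = ε := by group
  unfold G
  rw [hcan]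
  have hext : Equiv.Perm.extendDomain ε S.ec.toEquiv = δ := by
    refine Equiv.ext fun c => ?_
    by_cases hc : c ∈ InC S.F
    · set j := S.ec.symm ⟨c, hc⟩ with hj
      have hcj : (↑(S.ec j) : Fin n) = c := by rw [hj]; simp
      have h5 : Equiv.Perm.extendDomain ε S.ec.toEquiv ↑(S.ec j) = ↑(S.ec (ε j)) :=
        Equiv.Perm.extendDomain_apply_image ε S.ec.toEquiv j
      have h6 : (↑(S.ec (ε j)) : Fin n) = δ ↑(S.ec j) := by
        rw [hε]
        show (↑(S.ec (S.ec.symm.toEquiv ((δ.subtypeEquiv hδmem) (S.ec.toEquiv j)))) : Fin n) = _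
        rw [show (S.ec.symm.toEquiv ((δ.subtypeEquiv hδmem) (S.ec.toEquiv j)))
          = S.ec.symm ((δ.subtypeEquiv hδmem) (S.ec.toEquiv j)) from rfl]
        rw [OrderIso.apply_symm_apply]
        rcases h : S.ec.toEquiv j with ⟨a, ha⟩
        rw [Equiv.subtypeEquiv_apply]
      rw [← hcj, h5, h6]
    · rw [Equiv.Perm.extendDomain_apply_not_subtype _ _ hc, hδfix c hc]
  rw [hext, hδdef, mul_inv_cancel_left]

lemma contains_G_iff (hlam : Antitone lam) (hk : 0 < k) (γ : Perm (Fin k))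
    {ρ : Perm (Fin S.t)} (hρ : ∀ j, OutCert lam σ S.F ↑(S.er (ρ j)) ↑(S.ec j)) :
    TransversalContains lam (directSum γ σ) (S.G ρ) ↔ TransversalContains S.nu γ ρ := by
  rw [contains_directSum_iff hlam hk]
  constructor
  · rintro ⟨e, he, hiso, hW⟩
    have hmem : ∀ a, e a ∈ InC S.F := by
      intro a
      by_contra hc
      have hOC := (S.white_G_iff hρ _ _).mp (hW a a)
      have h1 : S.G ρ (e a) = S.T₀ (e a) := S.G_apply_not_inC ρ hc
      rw [h1] at hOC
      have hwt : White lam σ S.T₀ (S.T₀ (e a)) (e a) := white_of_outCert S.compat_T0 hOC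
      have h0 := phi_eq_none_iff.mpr hwt
      rw [S.hF] at h0
      exact hc ((S.mem_inC_iff _).mpr h0)
    set j : Fin k → Fin S.t := fun a => S.ec.symm ⟨e a, hmem a⟩ with hjdef
    have hcj : ∀ a, (↑(S.ec (j a)) : Fin n) = e a := fun a => by rw [hjdef]; simp
    have hTj : ∀ a, S.G ρ (e a) = ↑(S.er (ρ (j a))) := fun a => by
      rw [← hcj a, S.G_apply_inC]
    refine ⟨j, ?_, ?_, ?_⟩
    · intro a b hab
      have h7 : (⟨e a, hmem a⟩ : {x // x ∈ InC S.F}) < ⟨e b, hmem b⟩ :=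
        Subtype.mk_lt_mk.mpr (he hab)
      exact S.ec.symm.strictMono h7
    · intro a b
      rw [← hiso a b, hTj a, hTj b, Subtype.coe_lt_coe, S.er.lt_iff_lt]
    · intro a b
      have h8 : (↑(j a) : ℕ) < S.nu (ρ (j b)) := by
        rw [S.lt_nu_iff hlam, hcj a, ← hTj b]
        exact (S.white_G_iff hρ _ _).mp (hW a b)
      omega
  · rintro ⟨f, hf, hiso, hsq⟩
    refine ⟨fun a => ↑(S.ec (f a)),
      fun a b hab => Subtype.coe_lt_coe.mpr (S.ec.strictMono (hf hab)), ?_, ?_⟩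
    · intro a b
      rw [S.G_apply_inC, S.G_apply_inC, Subtype.coe_lt_coe, S.er.lt_iff_lt]
      exact hiso a b
    · intro a b
      rw [S.G_apply_inC, S.white_G_iff hρ]
      refine (S.lt_nu_iff hlam _ _).mp ?_
      have := hsq a b
      omega


lemma fiber_count (hlam : Antitone lam) (hk : 0 < k) (γ : Perm (Fin k)) :
    Nat.card {π : Perm (Fin n) // (IsTransversal lam π ∧ Equiv.Perm.sign π = 1 ∧
      ¬ TransversalContains lam (directSum γ σ) π) ∧ Phi lam σ π = S.F}
    = Nat.card {ρ : Perm (Fin S.t) // IsTransversal S.nu ρ ∧ Equiv.Perm.sign ρ = S.eps ∧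
      ¬ TransversalContains S.nu γ ρ} := by
  have key : ∀ ρ : Perm (Fin S.t),
      (IsTransversal S.nu ρ ∧ Equiv.Perm.sign ρ = S.eps ∧ ¬ TransversalContains S.nu γ ρ) ↔
      ((IsTransversal lam (S.G ρ) ∧ Equiv.Perm.sign (S.G ρ) = 1 ∧
        ¬ TransversalContains lam (directSum γ σ) (S.G ρ)) ∧ Phi lam σ (S.G ρ) = S.F) := by
    intro ρ
    constructor
    · rintro ⟨h1', h2', h3'⟩
      have hρ := S.outCert_of_nu hlam h1'
      have hphi := S.phi_G hρ
      refine ⟨⟨S.transversal_G hlam h1', ?_, ?_⟩, hphi⟩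
      · rw [S.sign_G, h2', Int.units_mul_self]
      · rw [S.contains_G_iff hlam hk γ hρ]
        exact h3'
    · rintro ⟨⟨h1', h2', h3'⟩, hphi⟩
      have hν : IsTransversal S.nu ρ := S.nu_transversal_of hlam h1' hphi
      have hρ := S.outCert_of_nu hlam hν
      refine ⟨hν, ?_, ?_⟩
      · have hsg := S.sign_G ρ
        rw [h2'] at hsg
        calc Equiv.Perm.sign ρ = S.eps * S.eps * Equiv.Perm.sign ρ := by
              rw [Int.units_mul_self, one_mul]
        _ = S.eps * (S.eps * Equiv.Perm.sign ρ) := by rw [mul_assoc]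
        _ = S.eps * 1 := by rw [← hsg]
        _ = S.eps := mul_one _
      · rw [← S.contains_G_iff hlam hk γ hρ]
        exact h3'
  refine (Nat.card_congr (Equiv.ofBijective
    (fun x : {ρ : Perm (Fin S.t) // IsTransversal S.nu ρ ∧ Equiv.Perm.sign ρ = S.eps ∧
        ¬ TransversalContains S.nu γ ρ} =>
      (⟨S.G x.1, (key x.1).mp x.2⟩ : {π : Perm (Fin n) //
        (IsTransversal lam π ∧ Equiv.Perm.sign π = 1 ∧
          ¬ TransversalContains lam (directSum γ σ) π) ∧ Phi lam σ π = S.F}))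
    ⟨?_, ?_⟩)).symm
  · intro x y hxy
    exact Subtype.ext (S.G_injective (congrArg Subtype.val hxy))
  · rintro ⟨T, hT⟩
    obtain ⟨ρ, hρe⟩ := S.exists_preimage hT.2
    exact ⟨⟨ρ, (key ρ).mpr (by rw [hρe]; exact hT)⟩, Subtype.ext hρe⟩

end Setup

lemma cnt_eq {k : ℕ} (t : ℕ) (ν : Fin t → ℕ) (hν : Antitone ν) (α β : Perm (Fin k))
    (h1 : EvenShapeWilfEquiv α β) (h2 : ShapeWilfEquiv α β) (ε : ℤˣ) :
    Nat.card {ρ : Perm (Fin t) // IsTransversal ν ρ ∧ Equiv.Perm.sign ρ = ε ∧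
      ¬ TransversalContains ν α ρ} =
    Nat.card {ρ : Perm (Fin t) // IsTransversal ν ρ ∧ Equiv.Perm.sign ρ = ε ∧
      ¬ TransversalContains ν β ρ} := by
  rcases Int.units_eq_one_or ε with rfl | rfl
  · exact h1 t ν hν
  · have hsplit : ∀ γ : Perm (Fin k), savShape ν γ = eavShape ν γ +
        Nat.card {ρ : Perm (Fin t) // IsTransversal ν ρ ∧ Equiv.Perm.sign ρ = -1 ∧
          ¬ TransversalContains ν γ ρ} := by
      intro γ
      have h := nat_card_split_sign
        (fun ρ => IsTransversal ν ρ ∧ ¬ TransversalContains ν γ ρ)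
      have e1 : Nat.card {ρ : Perm (Fin t) //
          (IsTransversal ν ρ ∧ ¬ TransversalContains ν γ ρ) ∧ Equiv.Perm.sign ρ = 1}
          = eavShape ν γ :=
        Nat.card_congr (Equiv.subtypeEquivRight (fun ρ => by tauto))
      have e2 : Nat.card {ρ : Perm (Fin t) //
          (IsTransversal ν ρ ∧ ¬ TransversalContains ν γ ρ) ∧ Equiv.Perm.sign ρ = -1}
          = Nat.card {ρ : Perm (Fin t) // IsTransversal ν ρ ∧ Equiv.Perm.sign ρ = -1 ∧
          ¬ TransversalContains ν γ ρ} :=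
        Nat.card_congr (Equiv.subtypeEquivRight (fun ρ => by tauto))
      exact h.trans (by rw [e1, e2])
    have hA := hsplit α
    have hB := hsplit β
    rw [h1 t ν hν, h2 t ν hν] at hA
    omega

end S9

/-- If `α` and `β` are both even-shape-Wilf-equivalent and shape-Wilf-equivalent, then
`α ⊕ σ` and `β ⊕ σ` are even-shape-Wilf-equivalent, for every pattern `σ`. -/
theorem stmt9 (k m : ℕ) (α β : Equiv.Perm (Fin k)) (σ : Equiv.Perm (Fin m))
    (h1 : EvenShapeWilfEquiv α β) (h2 : ShapeWilfEquiv α β) :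
    EvenShapeWilfEquiv (directSum α σ) (directSum β σ) := by
  rcases Nat.eq_zero_or_pos k with hk | hk
  · subst hk
    have hab : α = β := Equiv.ext fun x => x.elim0
    subst hab
    intro n lam _
    rfl
  · intro n lam hlam
    classical
    have expand : ∀ γ : Equiv.Perm (Fin k), eavShape lam (directSum γ σ) =
        ∑ F : Fin n → Option (Fin n), Nat.card {π : Equiv.Perm (Fin n) //
          (IsTransversal lam π ∧ Equiv.Perm.sign π = 1 ∧
            ¬ TransversalContains lam (directSum γ σ) π) ∧ S9.Phi lam σ π = F} :=
      fun γ => S9.nat_card_fiberwise _ _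
    rw [expand α, expand β]
    refine Finset.sum_congr rfl fun F _ => ?_
    by_cases hex : ∃ T₀ : Equiv.Perm (Fin n), IsTransversal lam T₀ ∧ S9.Phi lam σ T₀ = F
    · obtain ⟨T₀, h₀t, h₀F⟩ := hex
      let S : S9.Setup lam σ := ⟨F, T₀, h₀t, h₀F⟩
      have hFS : F = S.F := rfl
      rw [hFS, S.fiber_count hlam hk α, S.fiber_count hlam hk β]
      exact S9.cnt_eq S.t S.nu (S.nu_antitone hlam) α β h1 h2 S.eps
    · have e0 : ∀ γ : Equiv.Perm (Fin k), Nat.card {π : Equiv.Perm (Fin n) //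
          (IsTransversal lam π ∧ Equiv.Perm.sign π = 1 ∧
            ¬ TransversalContains lam (directSum γ σ) π) ∧ S9.Phi lam σ π = F} = 0 := by
        intro γ
        rw [Nat.card_eq_zero]
        exact Or.inl ⟨fun x => hex ⟨x.1, x.2.1.1, x.2.2⟩⟩
      rw [e0 α, e0 β]
end
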